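/- arXiv:1909.02162 — 2 statements merged into one kernel-verified Lean document; each statement's English description precedes it below -/
import Mathlib

section
/- (Lemma 2.10, a property of W^{1,p} functions.) Let p > 1 and let u ∈ W^{1,p}(ℝ) with weak derivative u′, where u denotes the continuous representative. Given ε_1 > 0, there exist a measurable set B ⊆ ℝ consisting of Lebesgue points of u′ and an integer ℓ ≥ 1 such that: (i) ∫_{ℝ∖B} |u′|^p dx ≤ ε_1·∫_ℝ |u′|^p dx; and (ii) for every open interval I′ with length |I′| ≤ 1/ℓ and I′ ∩ B ≠ ∅, and every x ∈ I′ ∩ B, one has (1/|I′|^p)·(1/|I′|)·∫_{I′} |u(y) − u(x) − u′(x)(y − x)|^p dy ≤ ε_1 and |u′(x)|^p ≥ (1 − ε_1)·(1/|I′|)·∫_{I′} |u′(y)|^p dy. -/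
open MeasureTheory Filter Topology Set
open scoped ENNReal NNReal

/-- The non-local functional `Λ(u, I)`. -/
noncomputable def Lam (phi : ℝ → ℝ) (p : ℝ) (I : Set ℝ) (u : ℝ → ℝ) : ℝ≥0∞ :=
  ∫⁻ x in I, ∫⁻ y in I, ENNReal.ofReal (phi |u x - u y| / |x - y| ^ (p + 1))

/-- The rescaled functional `Λ_δ(u, I) = δ^p Λ(u/δ, I)`. -/
noncomputable def LamD (phi : ℝ → ℝ) (p δ : ℝ) (I : Set ℝ) (u : ℝ → ℝ) : ℝ≥0∞ :=
  ENNReal.ofReal (δ ^ p) * Lam phi p I (fun x => u x / δ)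

/-- The standing assumptions on `φ`: vanishing at `0`, nonnegative, continuous on `[0,∞)`
except at finitely many points of `(0,∞)` where one-sided limits exist,
`φ(t) ≤ α t^(p+1)` on `[0,1]`, `φ ≤ β`, and the normalization
`∫_0^∞ φ(t) t^(-(p+1)) dt = 1/2`. -/
def PhiOK (phi : ℝ → ℝ) (p α β : ℝ) : Prop :=
  phi 0 = 0 ∧ (∀ t, 0 ≤ t → 0 ≤ phi t) ∧
  (∃ S : Finset ℝ, (↑S : Set ℝ) ⊆ Ioi (0:ℝ) ∧ ContinuousOn phi (Ici 0 \ S) ∧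
    ∀ s ∈ S, (∃ l : ℝ, Tendsto phi (𝓝[<] s) (𝓝 l)) ∧ (∃ l : ℝ, Tendsto phi (𝓝[>] s) (𝓝 l))) ∧
  (∀ t ∈ Icc (0:ℝ) 1, phi t ≤ α * t ^ (p + 1)) ∧
  (∀ t, 0 ≤ t → phi t ≤ β) ∧
  (∫ t in Ioi (0:ℝ), phi t / t ^ (p + 1)) = 1 / 2

/-- `v δ → u` in `L^p(I)` as `δ → 0⁺`, each `v δ` being in `L^p(I)`. -/
def TendstoLp (p : ℝ) (I : Set ℝ) (v : ℝ → ℝ → ℝ) (u : ℝ → ℝ) : Prop :=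
  (∀ δ, 0 < δ → MemLp (v δ) (ENNReal.ofReal p) (volume.restrict I)) ∧
  Tendsto (fun δ => eLpNorm (fun x => v δ x - u x) (ENNReal.ofReal p) (volume.restrict I))
    (𝓝[>] 0) (𝓝 0)

/-- The constant `κ`. -/
noncomputable def kapp (phi : ℝ → ℝ) (p : ℝ) : ℝ≥0∞ :=
  ⨅ (v : ℝ → ℝ → ℝ) (_ : TendstoLp p (Ioo 0 1) v (fun x => x)),
    Filter.liminf (fun δ => LamD phi p δ (Ioo 0 1) (v δ)) (𝓝[>] 0)

/-- The Heaviside-type function `H_{1/2}` on `(0,1)`. -/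
noncomputable def Hhalf : ℝ → ℝ := fun x => if x < 1 / 2 then 0 else 1

/-- The constant `γ` (for `p = 1`). -/
noncomputable def gamm (phi : ℝ → ℝ) (p : ℝ) : ℝ≥0∞ :=
  ⨅ (v : ℝ → ℝ → ℝ) (_ : TendstoLp p (Ioo 0 1) v Hhalf),
    Filter.liminf (fun δ => LamD phi p δ (Ioo 0 1) (v δ)) (𝓝[>] 0)

/-- `t` is a Lebesgue point of `u`. -/
def IsLebesguePoint (u : ℝ → ℝ) (t : ℝ) : Prop :=
  Tendsto (fun r => (1 / (2 * r)) * ∫ y in Ioo (t - r) (t + r), |u y - u t|)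
    (𝓝[>] 0) (𝓝 0)

lemma l210_finR {s : Set ℝ} (h : volume s ≠ ∞) : IsFiniteMeasure (volume.restrict s) :=
  ⟨by rwa [Measure.restrict_apply_univ, lt_top_iff_ne_top]⟩

lemma l210_convex {p : ℝ} (hp : 1 ≤ p) {l : ℝ} (hl0 : 0 < l) (hl1 : l < 1) {a b : ℝ}
    (ha : 0 ≤ a) (hb : 0 ≤ b) :
    (a + b) ^ p ≤ l ^ (1 - p) * a ^ p + (1 - l) ^ (1 - p) * b ^ p := by
  have hl1' : 0 < 1 - l := by linarith
  have h := (convexOn_rpow hp).2 (mem_Ici.2 (div_nonneg ha hl0.le))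
      (mem_Ici.2 (div_nonneg hb hl1'.le)) hl0.le hl1'.le (by ring)
  have e1 : l • (a / l) + (1 - l) • (b / (1 - l)) = a + b := by
    simp only [smul_eq_mul]
    field_simp
  have e2 : l • ((a / l) ^ p) = l ^ (1 - p) * a ^ p := by
    rw [smul_eq_mul, Real.div_rpow ha hl0.le, Real.rpow_sub hl0, Real.rpow_one]
    field_simp
  have e3 : (1 - l) • ((b / (1 - l)) ^ p) = (1 - l) ^ (1 - p) * b ^ p := by
    rw [smul_eq_mul, Real.div_rpow hb hl1'.le, Real.rpow_sub hl1', Real.rpow_one]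
    field_simp
  rw [e1, e2, e3] at h
  exact h

lemma l210_holder {p : ℝ} (hp : 1 < p) {s : Set ℝ} (hfin : volume s ≠ ∞)
    {g : ℝ → ℝ} (hg : MemLp g (ENNReal.ofReal p) (volume.restrict s)) :
    |∫ t in s, g t| ^ p ≤ (volume s).toReal ^ (p - 1) * ∫ t in s, |g t| ^ p := by
  haveI := l210_finR hfin
  have hpq := Real.HolderConjugate.conjExponent hp
  set q := Real.conjExponent p with hq
  have h1 : |∫ t in s, g t| ≤ ∫ t in s, |g t| := by
    simpa [Real.norm_eq_abs] using norm_integral_le_integral_norm (μ := volume.restrict s) g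
  have h2 : ∫ t in s, |g t| ≤ (∫ t in s, |g t| ^ p) ^ (1/p) * ((volume s).toReal) ^ (1/q) := by
    have := integral_mul_le_Lp_mul_Lq_of_nonneg hpq
      (f := fun t => |g t|) (g := fun _ => (1:ℝ))
      (Eventually.of_forall fun t => abs_nonneg _) (Eventually.of_forall fun _ => zero_le_one)
      (by simpa [Real.norm_eq_abs] using hg.norm) (memLp_const 1)
    simpa [Real.one_rpow, Measure.restrict_apply_univ, measureReal_def] using this
  have hA : (0:ℝ) ≤ ∫ t in s, |g t| ^ p :=
    integral_nonneg fun t => Real.rpow_nonneg (abs_nonneg _) _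
  have hm : (0:ℝ) ≤ (volume s).toReal := ENNReal.toReal_nonneg
  calc |∫ t in s, g t| ^ p ≤ ((∫ t in s, |g t| ^ p) ^ (1/p) * ((volume s).toReal) ^ (1/q)) ^ p := by
        apply Real.rpow_le_rpow (abs_nonneg _) (h1.trans h2) (by linarith)
    _ = (∫ t in s, |g t| ^ p) * ((volume s).toReal) ^ (p - 1) := by
        rw [Real.mul_rpow (Real.rpow_nonneg hA _) (Real.rpow_nonneg hm _),
          ← Real.rpow_mul hA, ← Real.rpow_mul hm, one_div_mul_cancel (by linarith : p ≠ 0),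
          Real.rpow_one, (by ring : 1 / q * p = p / q), hpq.div_conj_eq_sub_one]
    _ = (volume s).toReal ^ (p - 1) * ∫ t in s, |g t| ^ p := mul_comm _ _

-- integrability of |g - c|^p on finite-measure sets
lemma l210_intOn {p : ℝ} (hp : 1 < p) {g : ℝ → ℝ} (hg : MemLp g (ENNReal.ofReal p) volume)
    (c : ℝ) {s : Set ℝ} (hfin : volume s ≠ ∞) :
    IntegrableOn (fun t => |g t - c| ^ p) s volume := by
  haveI := l210_finR hfin
  have h := ((hg.restrict s).sub (memLp_const c)).integrable_norm_rpow
    (by simp [ENNReal.ofReal_eq_zero]; linarith) ENNReal.ofReal_ne_top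
  simpa [IntegrableOn, Real.norm_eq_abs, ENNReal.toReal_ofReal (by linarith : (0:ℝ) ≤ p)] using h

lemma l210_intOn' {p : ℝ} (hp : 1 < p) {g : ℝ → ℝ} (hg : MemLp g (ENNReal.ofReal p) volume) :
    Integrable (fun t => |g t| ^ p) volume := by
  have h := hg.integrable_norm_rpow (by simp [ENNReal.ofReal_eq_zero]; linarith)
    ENNReal.ofReal_ne_top
  simpa [Real.norm_eq_abs, ENNReal.toReal_ofReal (by linarith : (0:ℝ) ≤ p)] using h

-- continuity in the translation parameter
lemma l210_cont {p : ℝ} (hp : 1 < p) {g : ℝ → ℝ} (hgm : Measurable g)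
    (hg : MemLp g (ENNReal.ofReal p) volume) (a b : ℝ) :
    Continuous fun c : ℝ => ∫ t in Ioo a b, |g t - c| ^ p := by
  rw [continuous_iff_continuousAt]
  intro c₀
  have hfin : volume (Ioo a b) ≠ ∞ := by
    rw [Real.volume_Ioo]; exact ENNReal.ofReal_ne_top
  apply tendsto_integral_filter_of_dominated_convergence
    (bound := fun t => (|g t - c₀| + 1) ^ p)
  · filter_upwards with c
    exact ((hgm.sub measurable_const).abs.pow_const p).aestronglyMeasurable
  · filter_upwards [eventually_nhds_iff.2 ⟨Metric.ball c₀ 1, fun c hc => hc,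
      Metric.isOpen_ball, Metric.mem_ball_self one_pos⟩] with c hc
    filter_upwards with t
    rw [Real.norm_eq_abs, abs_of_nonneg (Real.rpow_nonneg (abs_nonneg _) _)]
    apply Real.rpow_le_rpow (abs_nonneg _) _ (by linarith)
    have : |c - c₀| < 1 := by simpa [Real.dist_eq] using hc
    calc |g t - c| ≤ |g t - c₀| + |c₀ - c| := abs_sub_le _ _ _
      _ ≤ |g t - c₀| + 1 := by rw [abs_sub_comm c₀ c]; linarith
  · have : IntegrableOn (fun t => ((|g t - c₀| + 1) : ℝ) ^ p) (Ioo a b) volume := by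
      haveI := l210_finR hfin
      have h2 : MemLp (fun t => |g t - c₀| + 1) (ENNReal.ofReal p) (volume.restrict (Ioo a b)) := by
        have := ((hg.restrict (Ioo a b)).sub (memLp_const c₀)).norm.add (memLp_const 1)
        simpa [Real.norm_eq_abs, Pi.add_def] using this
      have h := h2.integrable_norm_rpow (by simp [ENNReal.ofReal_eq_zero]; linarith)
        ENNReal.ofReal_ne_top
      have hnn : ∀ t : ℝ, (0:ℝ) ≤ |g t - c₀| + 1 := fun t => by positivity
      simpa [IntegrableOn, Real.norm_eq_abs, fun t => abs_of_nonneg (hnn t),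
        ENNReal.toReal_ofReal (by linarith : (0:ℝ) ≤ p)] using h
    exact this
  · filter_upwards with t
    exact ((continuous_const.sub continuous_id).abs.rpow_const
      (fun _ => Or.inr (by linarith))).tendsto c₀

-- average over closed balls in terms of Ioo integrals
lemma l210_avg (f : ℝ → ℝ) {x r : ℝ} (hr : 0 < r) :
    ⨍ y in Metric.closedBall x r, f y = (2 * r)⁻¹ * ∫ y in Ioo (x - r) (x + r), f y := by
  rw [setAverage_eq, Real.closedBall_eq_Icc, Real.volume_real_Icc_of_le (by linarith),
    integral_Icc_eq_integral_Ioo, (by ring : x + r - (x - r) = 2 * r), smul_eq_mul]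

section
variable {p : ℝ}

-- specialization of the doubling-measure Lebesgue differentiation theorem to fixed centers
lemma l210_spec1 {f : ℝ → ℝ} (hf : LocallyIntegrable f volume) :
    ∀ᵐ x, Tendsto (fun r => ⨍ y in Metric.closedBall x r, |f y - f x|) (𝓝[>] 0) (𝓝 0) := by
  filter_upwards [IsUnifLocDoublingMeasure.ae_tendsto_average_norm_sub volume hf 1] with x hx
  have hev : ∀ᶠ r in 𝓝[>] (0:ℝ), x ∈ Metric.closedBall ((fun _ : ℝ => x) r) (1 * r) := by
    filter_upwards [self_mem_nhdsWithin] with r hr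
    simp only [Metric.mem_closedBall, dist_self]
    simp only [mem_Ioi] at hr; linarith
  have := hx (fun _ : ℝ => x) id tendsto_id hev
  simpa [Real.norm_eq_abs] using this

lemma l210_spec2 {f : ℝ → ℝ} (hf : LocallyIntegrable f volume) :
    ∀ᵐ x, Tendsto (fun r => ⨍ y in Metric.closedBall x r, f y) (𝓝[>] 0) (𝓝 (f x)) := by
  filter_upwards [IsUnifLocDoublingMeasure.ae_tendsto_average volume hf 1] with x hx
  have hev : ∀ᶠ r in 𝓝[>] (0:ℝ), x ∈ Metric.closedBall ((fun _ : ℝ => x) r) (1 * r) := by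
    filter_upwards [self_mem_nhdsWithin] with r hr
    simp only [Metric.mem_closedBall, dist_self]
    simp only [mem_Ioi] at hr; linarith
  exact hx (fun _ : ℝ => x) id tendsto_id hev
end
lemma l210_leb {p : ℝ} (hp : 1 < p) {g : ℝ → ℝ} (hgm : Measurable g)
    (hg : MemLp g (ENNReal.ofReal p) volume) :
    ∀ᵐ x, (Tendsto (fun r => (2*r)⁻¹ * ∫ y in Ioo (x-r) (x+r), |g y - g x| ^ p) (𝓝[>] 0) (𝓝 0)) ∧
      Tendsto (fun r => (2*r)⁻¹ * ∫ y in Ioo (x-r) (x+r), |g y - g x|) (𝓝[>] 0) (𝓝 0) := by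
  have hp0 : (0:ℝ) < p := by linarith
  have hploc : ∀ c : ℝ, LocallyIntegrable (fun t => |g t - c| ^ p) volume := by
    intro c
    rw [locallyIntegrable_iff]
    intro k hk
    exact l210_intOn hp hg c hk.measure_lt_top.ne
  have hgloc : LocallyIntegrable g volume :=
    hg.locallyIntegrable (by simpa using ENNReal.one_le_ofReal.2 hp.le)
  filter_upwards [ae_all_iff.2 (fun q : ℚ => l210_spec2 (hploc (q:ℝ))), l210_spec1 hgloc]
    with x hx1 hx2
  constructor
  · -- the `L^p` Lebesgue point property
    rw [Metric.tendsto_nhds]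
    intro ε hε
    -- choose a rational close to g x
    obtain ⟨q, hq⟩ : ∃ q : ℚ, (2:ℝ)^(p-1) * |g x - (q:ℝ)| ^ p + (2:ℝ)^(p-1) * |(q:ℝ) - g x| ^ p < ε := by
      have hc : Continuous fun c : ℝ =>
          (2:ℝ)^(p-1) * |g x - c| ^ p + (2:ℝ)^(p-1) * |c - g x| ^ p := by
        apply Continuous.add
        · exact continuous_const.mul ((continuous_const.sub continuous_id).abs.rpow_const
            fun _ => Or.inr hp0.le)
        · exact continuous_const.mul ((continuous_id.sub continuous_const).abs.rpow_const
            fun _ => Or.inr hp0.le)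
      have h0 : (2:ℝ)^(p-1) * |g x - g x| ^ p + (2:ℝ)^(p-1) * |g x - g x| ^ p = 0 := by
        simp [Real.zero_rpow hp0.ne']
      have hev : ∀ᶠ c in 𝓝 (g x),
          (2:ℝ)^(p-1) * |g x - c| ^ p + (2:ℝ)^(p-1) * |c - g x| ^ p < ε := by
        have ht := hc.tendsto (g x)
        rw [h0] at ht
        exact ht.eventually_lt_const hε
      obtain ⟨δ, hδ, hball⟩ := Metric.eventually_nhds_iff.1 hev
      obtain ⟨q, hq1, hq2⟩ := exists_rat_btwn (show g x - δ < g x by linarith)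
      exact ⟨q, hball (by rw [Real.dist_eq]; rw [abs_lt]; constructor <;> linarith)⟩
    set C0 : ℝ := |(q:ℝ) - g x| ^ p with hC0
    set Cq : ℝ := (2:ℝ)^(p-1) * C0 with hCq
    have hq' := hx1 q
    have hlim : Tendsto (fun r => (2:ℝ)^(p-1) * (⨍ y in Metric.closedBall x r, |g y - (q:ℝ)|^p) + Cq)
        (𝓝[>] 0) (𝓝 ((2:ℝ)^(p-1) * |g x - (q:ℝ)|^p + Cq)) :=
      (hq'.const_mul _).add_const _
    have hev2 := hlim.eventually_lt_const hq
    filter_upwards [self_mem_nhdsWithin, hev2] with r hr hrlt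
    have hr0 : (0:ℝ) < r := hr
    have h2r : (0:ℝ) < 2 * r := by linarith
    have hfin : volume (Ioo (x-r) (x+r)) ≠ ∞ := by rw [Real.volume_Ioo]; exact ENNReal.ofReal_ne_top
    have hvol : (volume (Ioo (x-r) (x+r))).toReal = 2 * r := by
      rw [Real.volume_Ioo, (by ring : x + r - (x - r) = 2*r), ENNReal.toReal_ofReal h2r.le]
    have hAnn : (0:ℝ) ≤ (2*r)⁻¹ * ∫ y in Ioo (x-r) (x+r), |g y - g x| ^ p :=
      mul_nonneg (by positivity) (integral_nonneg fun y => Real.rpow_nonneg (abs_nonneg _) _)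
    rw [Real.dist_eq, sub_zero, abs_of_nonneg hAnn]
    have hhalf : ((1:ℝ)/2) ^ (1 - p) = (2:ℝ) ^ (p - 1) := by
      rw [one_div, Real.inv_rpow (by norm_num : (0:ℝ) ≤ 2), ← Real.rpow_neg (by norm_num : (0:ℝ) ≤ 2),
        neg_sub]
    have pointwise : ∀ y, |g y - g x| ^ p ≤ (2:ℝ)^(p-1) * |g y - (q:ℝ)|^p + Cq := by
      intro y
      have h1 : |g y - g x| ≤ |g y - (q:ℝ)| + |(q:ℝ) - g x| := abs_sub_le _ _ _
      have h2 := Real.rpow_le_rpow (abs_nonneg _) h1 hp0.le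
      have h3 := l210_convex hp.le one_half_pos (by norm_num : (1:ℝ)/2 < 1)
        (abs_nonneg (g y - (q:ℝ))) (abs_nonneg ((q:ℝ) - g x))
      rw [hhalf] at h3
      have : (1:ℝ) - 1/2 = 1/2 := by norm_num
      rw [this, hhalf] at h3
      calc |g y - g x| ^ p ≤ (|g y - (q:ℝ)| + |(q:ℝ) - g x|) ^ p := h2
        _ ≤ (2:ℝ)^(p-1) * |g y - (q:ℝ)|^p + (2:ℝ)^(p-1) * |(q:ℝ) - g x|^p := h3
        _ = (2:ℝ)^(p-1) * |g y - (q:ℝ)|^p + Cq := rfl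
    have int0 := l210_intOn hp hg (g x) hfin
    have int1 := (l210_intOn hp hg (q:ℝ) hfin).const_mul ((2:ℝ)^(p-1))
    have int2 : IntegrableOn (fun _ : ℝ => Cq) (Ioo (x-r) (x+r)) volume :=
      integrableOn_const hfin
    have hIle : (∫ y in Ioo (x-r) (x+r), |g y - g x| ^ p) ≤
        (2:ℝ)^(p-1) * (∫ y in Ioo (x-r) (x+r), |g y - (q:ℝ)|^p) + Cq * (2*r) := by
      have := setIntegral_mono_on int0 (int1.add int2) measurableSet_Ioo
        (fun y _ => pointwise y)
      simp only [Pi.add_apply] at this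
      rwa [integral_add int1 int2, integral_const_mul, setIntegral_const, measureReal_def, hvol, smul_eq_mul,
        mul_comm (2*r) Cq] at this
    calc (2*r)⁻¹ * ∫ y in Ioo (x-r) (x+r), |g y - g x| ^ p
        ≤ (2*r)⁻¹ * ((2:ℝ)^(p-1) * (∫ y in Ioo (x-r) (x+r), |g y - (q:ℝ)|^p) + Cq * (2*r)) :=
          mul_le_mul_of_nonneg_left hIle (by positivity)
      _ = (2:ℝ)^(p-1) * ((2*r)⁻¹ * ∫ y in Ioo (x-r) (x+r), |g y - (q:ℝ)|^p) + Cq := by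
          field_simp
      _ = (2:ℝ)^(p-1) * (⨍ y in Metric.closedBall x r, |g y - (q:ℝ)|^p) + Cq := by
          rw [l210_avg _ hr0]
      _ < ε := hrlt
  · -- the `L^1` Lebesgue point property
    apply hx2.congr'
    filter_upwards [self_mem_nhdsWithin] with r hr
    exact l210_avg _ hr

lemma l210_hfinIoo (a b : ℝ) : volume (Ioo a b) ≠ ∞ := by
  rw [Real.volume_Ioo]; exact ENNReal.ofReal_ne_top

lemma l210_key1 {p : ℝ} (hp : 1 < p) {u u' g : ℝ → ℝ}
    (hgu' : u' =ᵐ[volume] g) (hg : MemLp g (ENNReal.ofReal p) volume)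
    (hFTC : ∀ x y : ℝ, x ≤ y → u y - u x = ∫ t in x..y, u' t)
    {x a b : ℝ} (hab : a < b) (hx : x ∈ Ioo a b) (hux : u' x = g x) :
    (1 / (b - a) ^ p) * ((b - a)⁻¹ * ∫ y in Ioo a b, |u y - u x - u' x * (y - x)| ^ p)
      ≤ (b - a)⁻¹ * ∫ t in Ioo a b, |g t - g x| ^ p := by
  have hr : (0:ℝ) < b - a := by linarith
  set J := ∫ t in Ioo a b, |g t - g x| ^ p with hJdef
  have hJnn : 0 ≤ J := integral_nonneg fun t => Real.rpow_nonneg (abs_nonneg _) _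
  have hgint : ∀ c d : ℝ, IntegrableOn g (Ioo c d) volume := by
    intro c d
    haveI := l210_finR (l210_hfinIoo c d)
    exact (hg.restrict _).integrable (by simpa using ENNReal.one_le_ofReal.2 hp.le)
  have hvol : ∀ c d : ℝ, c ≤ d → (volume (Ioo c d)).toReal = d - c := by
    intro c d hcd
    rw [Real.volume_Ioo, ENNReal.toReal_ofReal (by linarith)]
  have core : ∀ c d : ℝ, a ≤ c → c ≤ d → d ≤ b →
      |∫ t in Ioo c d, (g t - g x)| ^ p ≤ (b - a) ^ (p - 1) * J := by
    intro c d hac hcd hdb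
    have h1 := l210_holder hp (l210_hfinIoo c d)
      ((hg.restrict _).sub (memLp_const (g x)))
    have h2 : (volume (Ioo c d)).toReal ^ (p - 1) ≤ (b - a) ^ (p - 1) := by
      apply Real.rpow_le_rpow ENNReal.toReal_nonneg _ (by linarith)
      rw [hvol c d hcd]; linarith
    have h3 : (∫ t in Ioo c d, |g t - g x| ^ p) ≤ J := by
      apply setIntegral_mono_set (l210_intOn hp hg (g x) (l210_hfinIoo a b))
        (Eventually.of_forall fun t => Real.rpow_nonneg (abs_nonneg _) _)
      exact (Ioo_subset_Ioo hac hdb).eventuallyLE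
    calc |∫ t in Ioo c d, (g t - g x)| ^ p
        ≤ (volume (Ioo c d)).toReal ^ (p - 1) * ∫ t in Ioo c d, |g t - g x| ^ p := h1
      _ ≤ (b - a) ^ (p - 1) * J := by
          apply mul_le_mul h2 h3 (integral_nonneg fun t => Real.rpow_nonneg (abs_nonneg _) _)
            (Real.rpow_nonneg (by linarith) _)
  have eqIoo : ∀ c d : ℝ, c ≤ d → ∫ t in Ioo c d, u' t = ∫ t in Ioo c d, g t := by
    intro c d _
    exact integral_congr_ae (ae_restrict_of_ae hgu')
  have cIoo : ∀ c d : ℝ, c ≤ d → ∫ t in Ioo c d, (g t - g x) =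
      (∫ t in Ioo c d, g t) - (d - c) * g x := by
    intro c d hcd
    rw [integral_sub (hgint c d) (integrableOn_const (l210_hfinIoo c d)),
      setIntegral_const, measureReal_def, hvol c d hcd, smul_eq_mul]
  have pointb : ∀ y ∈ Ioo a b, |u y - u x - u' x * (y - x)| ^ p ≤ (b - a) ^ (p - 1) * J := by
    intro y hy
    rcases le_total x y with hxy | hyx
    · have e1 : u y - u x - u' x * (y - x) = ∫ t in Ioo x y, (g t - g x) := by
        rw [hFTC x y hxy, intervalIntegral.integral_of_le hxy, integral_Ioc_eq_integral_Ioo,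
          eqIoo x y hxy, cIoo x y hxy, hux]
        ring
      rw [e1]
      exact core x y hx.1.le hxy hy.2.le
    · have e1 : u y - u x - u' x * (y - x) = -∫ t in Ioo y x, (g t - g x) := by
        have := hFTC y x hyx
        rw [intervalIntegral.integral_of_le hyx, integral_Ioc_eq_integral_Ioo,
          eqIoo y x hyx] at this
        rw [cIoo y x hyx, hux]
        nlinarith [this]
      rw [e1, abs_neg]
      exact core y x hy.1.le hyx hx.2.le
  have hIle : (∫ y in Ioo a b, |u y - u x - u' x * (y - x)| ^ p)
      ≤ ((b - a) ^ (p - 1) * J) * (b - a) := by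
    have h := norm_setIntegral_le_of_norm_le_const (μ := volume) (s := Ioo a b)
      (C := (b - a) ^ (p - 1) * J) (l210_hfinIoo a b).lt_top
      (fun y hy => by
        rw [Real.norm_eq_abs, abs_of_nonneg (Real.rpow_nonneg (abs_nonneg _) _)]
        exact pointb y hy)
    rw [Real.norm_eq_abs, measureReal_def, hvol a b hab.le] at h
    calc (∫ y in Ioo a b, |u y - u x - u' x * (y - x)| ^ p)
        ≤ |∫ y in Ioo a b, |u y - u x - u' x * (y - x)| ^ p| := le_abs_self _
      _ ≤ ((b - a) ^ (p - 1) * J) * (b - a) := h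
  have hrp : (0:ℝ) < (b - a) ^ p := Real.rpow_pos_of_pos hr p
  calc (1 / (b - a) ^ p) * ((b - a)⁻¹ * ∫ y in Ioo a b, |u y - u x - u' x * (y - x)| ^ p)
      ≤ (1 / (b - a) ^ p) * ((b - a)⁻¹ * (((b - a) ^ (p - 1) * J) * (b - a))) := by
        apply mul_le_mul_of_nonneg_left
          (mul_le_mul_of_nonneg_left hIle (inv_nonneg.2 hr.le)) (by positivity)
    _ = (b - a)⁻¹ * J := by
        have hre : (b - a) ^ (p - 1) = (b - a) ^ p / (b - a) := by
          rw [Real.rpow_sub hr, Real.rpow_one]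
        rw [hre]
        field_simp

lemma l210_key2 {p : ℝ} (hp : 1 < p)
    {g : ℝ → ℝ} (hg : MemLp g (ENNReal.ofReal p) volume) {lam : ℝ}
    (hl0 : 0 < lam) (hl1 : lam < 1) {x a b : ℝ} (hab : a < b) :
    (b - a)⁻¹ * ∫ t in Ioo a b, |g t| ^ p ≤
      lam ^ (1 - p) * ((b - a)⁻¹ * ∫ t in Ioo a b, |g t - g x| ^ p)
        + (1 - lam) ^ (1 - p) * |g x| ^ p := by
  have hr : (0:ℝ) < b - a := by linarith
  have hvol : (volume (Ioo a b)).toReal = b - a := by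
    rw [Real.volume_Ioo, ENNReal.toReal_ofReal (by linarith)]
  have pw : ∀ t, |g t| ^ p ≤ lam ^ (1 - p) * |g t - g x| ^ p + (1 - lam) ^ (1 - p) * |g x| ^ p := by
    intro t
    have h1 : |g t| ≤ |g t - g x| + |g x| := by
      calc |g t| = |(g t - g x) + g x| := by ring_nf
        _ ≤ |g t - g x| + |g x| := abs_add_le _ _
    calc |g t| ^ p ≤ (|g t - g x| + |g x|) ^ p :=
          Real.rpow_le_rpow (abs_nonneg _) h1 (by linarith)
      _ ≤ lam ^ (1 - p) * |g t - g x| ^ p + (1 - lam) ^ (1 - p) * |g x| ^ p :=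
          l210_convex hp.le hl0 hl1 (abs_nonneg _) (abs_nonneg _)
  have int0 : IntegrableOn (fun t => |g t| ^ p) (Ioo a b) volume := by
    have := l210_intOn hp hg 0 (l210_hfinIoo a b)
    simpa using this
  have int1 := (l210_intOn hp hg (g x) (l210_hfinIoo a b)).const_mul (lam ^ (1 - p))
  have int2 : IntegrableOn (fun _ : ℝ => (1 - lam) ^ (1 - p) * |g x| ^ p) (Ioo a b) volume :=
    integrableOn_const (l210_hfinIoo a b)
  have hIle : (∫ t in Ioo a b, |g t| ^ p) ≤
      lam ^ (1 - p) * (∫ t in Ioo a b, |g t - g x| ^ p)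
        + (1 - lam) ^ (1 - p) * |g x| ^ p * (b - a) := by
    have h := setIntegral_mono_on int0 (int1.add int2) measurableSet_Ioo (fun t _ => pw t)
    simp only [Pi.add_apply] at h
    rwa [integral_add int1 int2, integral_const_mul, setIntegral_const, measureReal_def, hvol, smul_eq_mul,
      mul_comm (b - a) _] at h
  calc (b - a)⁻¹ * ∫ t in Ioo a b, |g t| ^ p
      ≤ (b - a)⁻¹ * (lam ^ (1 - p) * (∫ t in Ioo a b, |g t - g x| ^ p)
            + (1 - lam) ^ (1 - p) * |g x| ^ p * (b - a)) :=
        mul_le_mul_of_nonneg_left hIle (inv_nonneg.2 hr.le)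
    _ = lam ^ (1 - p) * ((b - a)⁻¹ * ∫ t in Ioo a b, |g t - g x| ^ p)
          + (1 - lam) ^ (1 - p) * |g x| ^ p := by
        field_simp
lemma l210_ratlim {p : ℝ} (hp : 1 < p) {g : ℝ → ℝ} (hgm : Measurable g)
    (hg : MemLp g (ENNReal.ofReal p) volume) (c : ℝ) {x a b : ℝ} (hab : a < b)
    (hx : x ∈ Ioo a b) {D : ℝ}
    (hD : ∀ a' b' : ℚ, a < (a':ℝ) → (a':ℝ) < x → x < (b':ℝ) → (b':ℝ) < b →
      (((b':ℝ) - (a':ℝ))⁻¹ * ∫ t in Ioo (a':ℝ) (b':ℝ), |g t - c| ^ p) ≤ D) :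
    (b - a)⁻¹ * ∫ t in Ioo a b, |g t - c| ^ p ≤ D := by
  have hax : a < x := hx.1
  have hxb : x < b := hx.2
  -- rational sequences approaching a and b
  have hA : ∀ n : ℕ, ∃ q : ℚ, a < (q:ℝ) ∧ (q:ℝ) < min x (a + 1/(n+1)) := by
    intro n
    obtain ⟨q, h1, h2⟩ := exists_rat_btwn (show a < min x (a + 1/(n+1)) by
      apply lt_min hax; have : (0:ℝ) < 1/(n+1) := by positivity
      linarith)
    exact ⟨q, h1, h2⟩
  have hB : ∀ n : ℕ, ∃ q : ℚ, max x (b - 1/(n+1)) < (q:ℝ) ∧ (q:ℝ) < b := by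
    intro n
    obtain ⟨q, h1, h2⟩ := exists_rat_btwn (show max x (b - 1/(n+1)) < b by
      apply max_lt hxb; have : (0:ℝ) < 1/(n+1) := by positivity
      linarith)
    exact ⟨q, h1, h2⟩
  choose A hA1 hA2 using hA
  choose B hB1 hB2 using hB
  have hAx : ∀ n, ((A n : ℝ)) < x := fun n => lt_of_lt_of_le (hA2 n) (min_le_left _ _)
  have hBx : ∀ n, x < ((B n : ℝ)) := fun n => lt_of_le_of_lt (le_max_left _ _) (hB1 n)
  have hAtend : Tendsto (fun n : ℕ => ((A n : ℝ))) atTop (𝓝 a) := by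
    refine tendsto_of_tendsto_of_tendsto_of_le_of_le (g := fun _ : ℕ => a)
      (h := fun n : ℕ => a + 1/(n+1)) tendsto_const_nhds ?_ ?_ ?_
    · have : Tendsto (fun n : ℕ => a + 1/(n+1 : ℝ)) atTop (𝓝 (a + 0)) :=
        tendsto_const_nhds.add tendsto_one_div_add_atTop_nhds_zero_nat
      simpa using this
    · exact fun n => (hA1 n).le
    · exact fun n => ((hA2 n).trans_le (min_le_right _ _)).le
  have hBtend : Tendsto (fun n : ℕ => ((B n : ℝ))) atTop (𝓝 b) := by
    refine tendsto_of_tendsto_of_tendsto_of_le_of_le (g := fun n : ℕ => b - 1/(n+1))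
      (h := fun _ : ℕ => b) ?_ ?_ ?_ ?_
    · have : Tendsto (fun n : ℕ => b - 1/(n+1 : ℝ)) atTop (𝓝 (b - 0)) :=
        tendsto_const_nhds.sub tendsto_one_div_add_atTop_nhds_zero_nat
      simpa using this
    · exact tendsto_const_nhds
    · exact fun n => (lt_of_le_of_lt (le_max_right _ _) (hB1 n)).le
    · exact fun n => (hB2 n).le
  -- convergence of the integrals
  have hFint : IntegrableOn (fun t => |g t - c| ^ p) (Ioo a b) volume :=
    l210_intOn hp hg c (l210_hfinIoo a b)
  have hsub : ∀ n, Ioo ((A n : ℝ)) ((B n : ℝ)) ⊆ Ioo a b :=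
    fun n => Ioo_subset_Ioo (hA1 n).le (hB2 n).le
  have hItend : Tendsto (fun n => ∫ t in Ioo ((A n : ℝ)) ((B n : ℝ)), |g t - c| ^ p) atTop
      (𝓝 (∫ t in Ioo a b, |g t - c| ^ p)) := by
    have hmeasF : AEStronglyMeasurable (fun t => |g t - c| ^ p) volume :=
      (by fun_prop : Measurable fun t => |g t - c| ^ p).aestronglyMeasurable
    simp only [← integral_indicator measurableSet_Ioo]
    apply tendsto_integral_filter_of_dominated_convergence
      (bound := (Ioo a b).indicator fun t => |g t - c| ^ p)
    · filter_upwards with n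
      exact (hmeasF.indicator measurableSet_Ioo)
    · filter_upwards with n
      filter_upwards with t
      by_cases ht : t ∈ Ioo ((A n : ℝ)) ((B n : ℝ))
      · rw [indicator_of_mem ht, indicator_of_mem (hsub n ht), Real.norm_eq_abs,
          abs_of_nonneg (Real.rpow_nonneg (abs_nonneg _) _)]
      · rw [indicator_of_notMem ht, norm_zero]
        exact indicator_nonneg (fun t _ => Real.rpow_nonneg (abs_nonneg _) _) t
    · exact hFint.integrable_indicator measurableSet_Ioo
    · filter_upwards with t
      by_cases ht : t ∈ Ioo a b
      · have h1 : ∀ᶠ n : ℕ in atTop, t ∈ Ioo ((A n : ℝ)) ((B n : ℝ)) := by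
          filter_upwards [hAtend.eventually_lt_const ht.1, hBtend.eventually_const_lt ht.2]
            with n h1 h2
          exact ⟨h1, h2⟩
        apply Tendsto.congr' _ (tendsto_const_nhds (x := (Ioo a b).indicator
          (fun t => |g t - c| ^ p) t))
        filter_upwards [h1] with n hn
        rw [indicator_of_mem ht, indicator_of_mem hn]
      · have : ∀ n, (Ioo ((A n : ℝ)) ((B n : ℝ))).indicator (fun t => |g t - c| ^ p) t = 0 :=
          fun n => indicator_of_notMem (fun hmem => ht (hsub n hmem)) _
        rw [indicator_of_notMem ht]
        simpa [this] using tendsto_const_nhds (x := (0:ℝ))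
  have hRtend : Tendsto (fun n => (((B n : ℝ)) - ((A n : ℝ)))⁻¹ *
      ∫ t in Ioo ((A n : ℝ)) ((B n : ℝ)), |g t - c| ^ p) atTop
      (𝓝 ((b - a)⁻¹ * ∫ t in Ioo a b, |g t - c| ^ p)) := by
    exact ((hBtend.sub hAtend).inv₀ (by linarith)).mul hItend
  apply le_of_tendsto_of_tendsto hRtend tendsto_const_nhds
  filter_upwards with n
  exact hD (A n) (B n) (hA1 n) (hAx n) (hBx n) (hB2 n)
lemma l210_Gmeas {p : ℝ} (hp : 1 < p) {g : ℝ → ℝ} (hgm : Measurable g)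
    (hg : MemLp g (ENNReal.ofReal p) volume) (θ ε : ℝ) (m : ℕ) :
    MeasurableSet {x : ℝ | ∀ a b : ℚ, (a:ℝ) < (b:ℝ) → (b:ℝ) - (a:ℝ) ≤ 1/(m:ℝ) →
      x ∈ Ioo (a:ℝ) (b:ℝ) →
      (((b:ℝ) - (a:ℝ))⁻¹ * ∫ t in Ioo (a:ℝ) (b:ℝ), |g t - g x| ^ p) ≤ min ε (θ * |g x| ^ p)} := by
  have hp0 : (0:ℝ) < p := by linarith
  have : {x : ℝ | ∀ a b : ℚ, (a:ℝ) < (b:ℝ) → (b:ℝ) - (a:ℝ) ≤ 1/(m:ℝ) →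
      x ∈ Ioo (a:ℝ) (b:ℝ) →
      (((b:ℝ) - (a:ℝ))⁻¹ * ∫ t in Ioo (a:ℝ) (b:ℝ), |g t - g x| ^ p) ≤ min ε (θ * |g x| ^ p)}
      = ⋂ (a : ℚ) (b : ℚ), {x : ℝ | (a:ℝ) < (b:ℝ) → (b:ℝ) - (a:ℝ) ≤ 1/(m:ℝ) →
      x ∈ Ioo (a:ℝ) (b:ℝ) →
      (((b:ℝ) - (a:ℝ))⁻¹ * ∫ t in Ioo (a:ℝ) (b:ℝ), |g t - g x| ^ p) ≤ min ε (θ * |g x| ^ p)} := by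
    ext x; simp only [mem_setOf_eq, mem_iInter]
  rw [this]
  refine MeasurableSet.iInter fun a => MeasurableSet.iInter fun b => ?_
  by_cases hab : ((a:ℝ) < (b:ℝ) ∧ (b:ℝ) - (a:ℝ) ≤ 1/(m:ℝ))
  · have heq : {x : ℝ | (a:ℝ) < (b:ℝ) → (b:ℝ) - (a:ℝ) ≤ 1/(m:ℝ) →
        x ∈ Ioo (a:ℝ) (b:ℝ) →
        (((b:ℝ) - (a:ℝ))⁻¹ * ∫ t in Ioo (a:ℝ) (b:ℝ), |g t - g x| ^ p) ≤ min ε (θ * |g x| ^ p)}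
        = (Ioo (a:ℝ) (b:ℝ))ᶜ ∪ g ⁻¹' {c : ℝ |
          (((b:ℝ) - (a:ℝ))⁻¹ * ∫ t in Ioo (a:ℝ) (b:ℝ), |g t - c| ^ p) ≤ min ε (θ * |c| ^ p)} := by
      ext x
      simp only [mem_setOf_eq, mem_union, mem_compl_iff, mem_preimage]
      constructor
      · intro h
        by_cases hx : x ∈ Ioo (a:ℝ) (b:ℝ)
        · exact Or.inr (h hab.1 hab.2 hx)
        · exact Or.inl hx
      · rintro (h | h) _ _ hx
        · exact absurd hx h
        · exact h
    rw [heq]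
    refine measurableSet_Ioo.compl.union (hgm ?_)
    have hcl : IsClosed {c : ℝ |
        (((b:ℝ) - (a:ℝ))⁻¹ * ∫ t in Ioo (a:ℝ) (b:ℝ), |g t - c| ^ p) ≤ min ε (θ * |c| ^ p)} := by
      apply isClosed_le
      · exact continuous_const.mul (l210_cont hp hgm hg _ _)
      · exact continuous_const.min (continuous_const.mul
          (continuous_abs.rpow_const fun _ => Or.inr hp0.le))
    exact hcl.measurableSet
  · have heq : {x : ℝ | (a:ℝ) < (b:ℝ) → (b:ℝ) - (a:ℝ) ≤ 1/(m:ℝ) →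
        x ∈ Ioo (a:ℝ) (b:ℝ) →
        (((b:ℝ) - (a:ℝ))⁻¹ * ∫ t in Ioo (a:ℝ) (b:ℝ), |g t - g x| ^ p) ≤ min ε (θ * |g x| ^ p)}
        = univ := by
      apply eq_univ_of_forall
      intro x h1 h2
      exact absurd ⟨h1, h2⟩ hab
    rw [heq]
    exact MeasurableSet.univ

/-- Lemma 2.10, a property of `W^{1,p}` functions. -/
theorem lemma_2_10 (p : ℝ) (hp : 1 < p)
    (u u' : ℝ → ℝ)
    (hu : MemLp u (ENNReal.ofReal p) volume)
    (hu' : MemLp u' (ENNReal.ofReal p) volume)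
    (hFTC : ∀ x y : ℝ, x ≤ y → u y - u x = ∫ t in x..y, u' t)
    (ε1 : ℝ) (hε1 : 0 < ε1) :
    ∃ (B : Set ℝ) (ℓ : ℕ), MeasurableSet B ∧ (∀ x ∈ B, IsLebesguePoint u' x) ∧ 1 ≤ ℓ ∧
      (∫ x in Bᶜ, |u' x| ^ p) ≤ ε1 * ∫ x : ℝ, |u' x| ^ p ∧
      ∀ a b : ℝ, a < b → b - a ≤ 1 / (ℓ : ℝ) → (Ioo a b ∩ B).Nonempty →
        ∀ x ∈ Ioo a b ∩ B,
          (1 / (b - a) ^ p) *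
              ((b - a)⁻¹ * ∫ y in Ioo a b, |u y - u x - u' x * (y - x)| ^ p) ≤ ε1 ∧
          (1 - ε1) * ((b - a)⁻¹ * ∫ y in Ioo a b, |u' y| ^ p) ≤ |u' x| ^ p := by
  classical
  have hp0 : (0:ℝ) < p := by linarith
  have hpm1 : (0:ℝ) < p - 1 := by linarith
  set g : ℝ → ℝ := hu'.1.mk u' with hgdef
  have hgsm : StronglyMeasurable g := hu'.1.stronglyMeasurable_mk
  have hgm : Measurable g := hgsm.measurable
  have hgu' : u' =ᵐ[volume] g := hu'.1.ae_eq_mk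
  have hg : MemLp g (ENNReal.ofReal p) volume := hu'.ae_eq hgu'
  set T : Set ℝ := toMeasurable volume {x | ¬ u' x = g x} with hTdef
  have hTnull : volume T = 0 := by
    rw [hTdef, measure_toMeasurable]
    exact hgu'
  have hTm : MeasurableSet T := measurableSet_toMeasurable _ _
  have hTeq : ∀ x, x ∉ T → u' x = g x := by
    intro x hx
    by_contra h
    exact hx (subset_toMeasurable _ _ h)
  set ε : ℝ := min ε1 2⁻¹ with hεdef
  have hε0 : 0 < ε := lt_min hε1 (by norm_num)
  have hεle : ε ≤ ε1 := min_le_left _ _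
  have hεhalf : ε ≤ 2⁻¹ := min_le_right _ _
  have h1ε : 0 < 1 - ε := by
    have : (2:ℝ)⁻¹ < 1 := by norm_num
    linarith
  have h1ε2 : 0 < 1 - ε/2 := by linarith
  set ρ0 : ℝ := (1 - ε)/(1 - ε/2) with hρ0def
  have hρpos : 0 < ρ0 := div_pos h1ε h1ε2
  have hρlt1 : ρ0 < 1 := (div_lt_one h1ε2).2 (by linarith)
  set lam : ℝ := 1 - ρ0 ^ (1/(p-1)) with hlamdef
  have hpow_pos : 0 < ρ0 ^ (1/(p-1)) := Real.rpow_pos_of_pos hρpos _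
  have hpow_lt1 : ρ0 ^ (1/(p-1)) < 1 := Real.rpow_lt_one hρpos.le hρlt1 (by positivity)
  have hlam0 : 0 < lam := by rw [hlamdef]; linarith
  have hlam1 : lam < 1 := by
    rw [hlamdef]; linarith
  set θ : ℝ := (ε/2) * lam ^ (p-1) / (1 - ε) with hθdef
  have hθpos : 0 < θ :=
    div_pos (mul_pos (by linarith) (Real.rpow_pos_of_pos hlam0 _)) h1ε
  have hlam_id : lam ^ (1-p) * lam ^ (p-1) = 1 := by
    rw [← Real.rpow_add hlam0]
    norm_num
  have id2 : (1 - ε) * (1 - lam) ^ (1-p) = 1 - ε/2 := by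
    have h1 : (1 - lam) = ρ0 ^ (1/(p-1)) := by rw [hlamdef]; ring
    have h2 : ((ρ0 ^ (1/(p-1))) ^ (1-p)) = ρ0 ^ ((1/(p-1)) * (1-p)) :=
      (Real.rpow_mul hρpos.le _ _).symm
    have hexp : (1/(p-1)) * (1-p) = -1 := by
      rw [div_mul_eq_mul_div, one_mul, div_eq_iff hpm1.ne', neg_one_mul, neg_sub]
    rw [h1, h2, hexp, Real.rpow_neg_one, hρ0def]
    field_simp
  -- the sets G m
  set G : ℕ → Set ℝ := fun m => {x : ℝ | ∀ a b : ℚ, (a:ℝ) < (b:ℝ) →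
      (b:ℝ) - (a:ℝ) ≤ 1/(m:ℝ) → x ∈ Ioo (a:ℝ) (b:ℝ) →
      (((b:ℝ) - (a:ℝ))⁻¹ * ∫ t in Ioo (a:ℝ) (b:ℝ), |g t - g x| ^ p)
        ≤ min ε (θ * |g x| ^ p)} with hGdef
  have hGmeas : ∀ m, MeasurableSet (G m) := fun m => l210_Gmeas hp hgm hg θ ε m
  have hGreal : ∀ (m : ℕ) x, x ∈ G m → ∀ a b : ℝ, a < b → b - a ≤ 1/(m:ℝ) → x ∈ Ioo a b →
      ((b - a)⁻¹ * ∫ t in Ioo a b, |g t - g x| ^ p) ≤ min ε (θ * |g x| ^ p) := by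
    intro m x hxG a b hab hlen hx
    apply l210_ratlim hp hgm hg (g x) hab hx
    intro a' b' h1 h2 h3 h4
    exact hxG a' b' (by linarith) (by linarith) ⟨h2, h3⟩
  -- Lebesgue points
  set LP : Set ℝ := {x : ℝ |
    (Tendsto (fun r => (2*r)⁻¹ * ∫ y in Ioo (x-r) (x+r), |g y - g x| ^ p) (𝓝[>] 0) (𝓝 0)) ∧
      Tendsto (fun r => (2*r)⁻¹ * ∫ y in Ioo (x-r) (x+r), |g y - g x|) (𝓝[>] 0) (𝓝 0)}
    with hLPdef
  set W : Set ℝ := toMeasurable volume LPᶜ with hWdef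
  have hWnull : volume W = 0 := by
    rw [hWdef, measure_toMeasurable, hLPdef, compl_setOf]
    exact ae_iff.1 (l210_leb hp hgm hg)
  have hWm : MeasurableSet W := measurableSet_toMeasurable _ _
  have hWLP : ∀ x, x ∉ W → x ∈ LP := by
    intro x hx
    by_contra h
    exact hx (subset_toMeasurable _ _ h)
  set E : Set ℝ := (Tᶜ ∩ Wᶜ) ∩ {x | g x ≠ 0} with hEdef
  have hEm : MeasurableSet E :=
    (hTm.compl.inter hWm.compl).inter (hgm (measurableSet_singleton 0)).compl
  -- every point of E belongs to some G (n+1)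
  have point : ∀ x ∈ E, ∃ n : ℕ, x ∈ G (n+1) := by
    rintro x ⟨⟨hxT, hxW⟩, hxg⟩
    have hLPx := hWLP x hxW
    have hρ : 0 < min ε (θ * |g x| ^ p) :=
      lt_min hε0 (mul_pos hθpos (Real.rpow_pos_of_pos (abs_pos.2 hxg) _))
    have hev := hLPx.1.eventually_lt_const (show (0:ℝ) < min ε (θ * |g x| ^ p) / 2 by linarith)
    obtain ⟨r₀, hr₀pos, hr₀⟩ : ∃ r₀ > 0, ∀ r : ℝ, 0 < r → r < r₀ →
        (2*r)⁻¹ * ∫ y in Ioo (x-r) (x+r), |g y - g x| ^ p < min ε (θ * |g x| ^ p) / 2 := by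
      rw [eventually_nhdsWithin_iff] at hev
      obtain ⟨δ, hδpos, hδ⟩ := Metric.eventually_nhds_iff.1 hev
      exact ⟨δ, hδpos, fun r hr1 hr2 =>
        hδ (by rw [Real.dist_eq, sub_zero, abs_of_pos hr1]; exact hr2) hr1⟩
    obtain ⟨n, hn⟩ := exists_nat_one_div_lt hr₀pos
    refine ⟨n, ?_⟩
    intro a b hab hlen hx'
    have hr0 : (0:ℝ) < (b:ℝ) - (a:ℝ) := by linarith
    have hrlt : (b:ℝ) - (a:ℝ) < r₀ := by
      apply lt_of_le_of_lt hlen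
      have : ((n+1 : ℕ):ℝ) = (n:ℝ) + 1 := by push_cast; ring
      rw [this]
      exact hn
    set r : ℝ := (b:ℝ) - (a:ℝ) with hrdef
    have hsub : Ioo (a:ℝ) (b:ℝ) ⊆ Ioo (x - r) (x + r) := by
      intro t ht
      constructor
      · have h1 := hx'.2
        have h2 := ht.1
        simp only [hrdef]
        linarith
      · have h1 := hx'.1
        have h2 := ht.2
        simp only [hrdef]
        linarith
    have hmono : (∫ t in Ioo (a:ℝ) (b:ℝ), |g t - g x| ^ p)
        ≤ ∫ y in Ioo (x-r) (x+r), |g y - g x| ^ p :=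
      setIntegral_mono_set (l210_intOn hp hg (g x) (l210_hfinIoo _ _))
        (Eventually.of_forall fun t => Real.rpow_nonneg (abs_nonneg _) _)
        hsub.eventuallyLE
    have hval := hr₀ r hr0 hrlt
    calc r⁻¹ * ∫ t in Ioo (a:ℝ) (b:ℝ), |g t - g x| ^ p
        ≤ r⁻¹ * ∫ y in Ioo (x-r) (x+r), |g y - g x| ^ p :=
          mul_le_mul_of_nonneg_left hmono (inv_nonneg.2 hr0.le)
      _ = 2 * ((2*r)⁻¹ * ∫ y in Ioo (x-r) (x+r), |g y - g x| ^ p) := by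
          field_simp
      _ ≤ 2 * (min ε (θ * |g x| ^ p) / 2) := by
          apply mul_le_mul_of_nonneg_left hval.le (by norm_num)
      _ = min ε (θ * |g x| ^ p) := by ring
  -- the monotone family S
  set S : ℕ → Set ℝ := fun n => E ∩ G (n+1) with hSdef
  have hSm : ∀ n, MeasurableSet (S n) := fun n => hEm.inter (hGmeas (n+1))
  have hSmono : Monotone S := by
    intro n m hnm
    apply inter_subset_inter_right
    intro x hx a b hab hlen hx'
    apply hx a b hab _ hx'
    apply hlen.trans
    apply one_div_le_one_div_of_le
    · exact_mod_cast Nat.succ_pos n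
    · exact_mod_cast Nat.succ_le_succ hnm
  have hSunion : (⋃ n, S n) = E := by
    apply Subset.antisymm
    · exact iUnion_subset fun n => inter_subset_left
    · intro x hx
      obtain ⟨n, hn⟩ := point x hx
      exact mem_iUnion.2 ⟨n, hx, hn⟩
  have hint : Integrable (fun x => |g x| ^ p) volume := l210_intOn' hp hg
  set tot : ℝ := ∫ x, |g x| ^ p with htotdef
  have htot0 : 0 ≤ tot := integral_nonneg fun x => Real.rpow_nonneg (abs_nonneg _) _
  have hEfull : (∫ x in E, |g x| ^ p) = tot := by
    have hsplit := integral_add_compl hEm hint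
    have hEc : (∫ x in Eᶜ, |g x| ^ p) = 0 := by
      have hae : (fun x => |g x| ^ p) =ᵐ[volume.restrict Eᶜ] 0 := by
        rw [EventuallyEq, ae_restrict_iff' hEm.compl]
        have hTW : volume (T ∪ W) = 0 := measure_union_null hTnull hWnull
        filter_upwards [measure_eq_zero_iff_ae_notMem.1 hTW] with x hx hxEc
        have hgx : g x = 0 := by
          by_contra h
          exact hxEc ⟨⟨fun hT => hx (Or.inl hT), fun hW => hx (Or.inr hW)⟩, h⟩
        simp [hgx, Real.zero_rpow hp0.ne']
      calc ∫ x in Eᶜ, |g x| ^ p = ∫ x in Eᶜ, (0:ℝ) := integral_congr_ae hae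
        _ = 0 := integral_zero _ _
    linarith [hsplit]
  obtain ⟨N, hN⟩ : ∃ n : ℕ, tot - (∫ x in S n, |g x| ^ p) ≤ ε * tot := by
    have htend : Tendsto (fun n => ∫ x in S n, |g x| ^ p) atTop (𝓝 tot) := by
      have h := tendsto_setIntegral_of_monotone hSm hSmono (hint.integrableOn)
      rwa [hSunion, hEfull] at h
    rcases eq_or_lt_of_le htot0 with h0 | h0
    · refine ⟨0, ?_⟩
      have h1 : (∫ x in S 0, |g x| ^ p) ≤ tot :=
        setIntegral_le_integral hint
          (Eventually.of_forall fun x => Real.rpow_nonneg (abs_nonneg _) _)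
      have h2 : 0 ≤ ∫ x in S 0, |g x| ^ p :=
        integral_nonneg fun x => Real.rpow_nonneg (abs_nonneg _) _
      nlinarith
    · have hlt : tot - tot < ε * tot := by
        have := mul_pos hε0 h0
        linarith
      obtain ⟨n, hn⟩ := ((tendsto_const_nhds.sub htend).eventually_lt_const hlt).exists
      exact ⟨n, hn.le⟩
  refine ⟨S N, N + 1, hSm N, ?_, Nat.succ_le_succ (Nat.zero_le N), ?_, ?_⟩
  · -- Lebesgue point property
    rintro x ⟨⟨⟨hxT, hxW⟩, hxg⟩, hxG⟩
    have hLPx := hWLP x hxW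
    have hux : u' x = g x := hTeq x hxT
    have heq : ∀ r : ℝ, (∫ y in Ioo (x-r) (x+r), |u' y - u' x|)
        = ∫ y in Ioo (x-r) (x+r), |g y - g x| := by
      intro r
      apply integral_congr_ae
      apply ae_restrict_of_ae
      filter_upwards [hgu'] with y hy
      rw [hy, hux]
    apply hLPx.2.congr
    intro r
    rw [heq r, one_div]
  · -- complement integral
    have habs : (fun x => |u' x| ^ p) =ᵐ[volume] (fun x => |g x| ^ p) := by
      filter_upwards [hgu'] with x hx
      rw [hx]
    have e1 : (∫ x in (S N)ᶜ, |u' x| ^ p) = ∫ x in (S N)ᶜ, |g x| ^ p :=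
      integral_congr_ae (ae_restrict_of_ae habs)
    have e2 : (∫ x : ℝ, |u' x| ^ p) = tot := integral_congr_ae habs
    have hsplit := integral_add_compl (hSm N) hint
    rw [e1, e2]
    have e3 : (∫ x in (S N)ᶜ, |g x| ^ p) = tot - ∫ x in S N, |g x| ^ p := by
      linarith [hsplit]
    rw [e3]
    calc tot - ∫ x in S N, |g x| ^ p ≤ ε * tot := hN
      _ ≤ ε1 * tot := mul_le_mul_of_nonneg_right hεle htot0
  · -- interval estimates
    rintro a b hab hlen - x ⟨hxI, hxB⟩
    obtain ⟨⟨⟨hxT, hxW⟩, hxg⟩, hxG⟩ := hxB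
    have hux : u' x = g x := hTeq x hxT
    have hlen' : b - a ≤ 1/((N+1 : ℕ):ℝ) := hlen
    have hR := hGreal (N+1) x hxG a b hab hlen' hxI
    constructor
    · calc (1 / (b-a)^p) * ((b-a)⁻¹ * ∫ y in Ioo a b, |u y - u x - u' x * (y-x)| ^ p)
          ≤ (b-a)⁻¹ * ∫ t in Ioo a b, |g t - g x| ^ p :=
            l210_key1 hp hgu' hg hFTC hab hxI hux
        _ ≤ min ε (θ * |g x| ^ p) := hR
        _ ≤ ε := min_le_left _ _
        _ ≤ ε1 := hεle
    · have hQe : ((b-a)⁻¹ * ∫ y in Ioo a b, |u' y| ^ p)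
          = (b-a)⁻¹ * ∫ t in Ioo a b, |g t| ^ p := by
        congr 1
        apply integral_congr_ae
        apply ae_restrict_of_ae
        filter_upwards [hgu'] with y hy
        rw [hy]
      have hQnn : 0 ≤ (b-a)⁻¹ * ∫ t in Ioo a b, |g t| ^ p :=
        mul_nonneg (inv_nonneg.2 (by linarith))
          (integral_nonneg fun t => Real.rpow_nonneg (abs_nonneg _) _)
      rw [hQe, hux]
      have hkey2 := l210_key2 hp hg hlam0 hlam1 (x := x) hab
      have hRθ : ((b-a)⁻¹ * ∫ t in Ioo a b, |g t - g x| ^ p) ≤ θ * |g x| ^ p :=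
        hR.trans (min_le_right _ _)
      have hlampow : 0 < lam ^ (1-p) := Real.rpow_pos_of_pos hlam0 _
      have step1 : (1 - ε1) * ((b-a)⁻¹ * ∫ t in Ioo a b, |g t| ^ p)
          ≤ (1 - ε) * ((b-a)⁻¹ * ∫ t in Ioo a b, |g t| ^ p) :=
        mul_le_mul_of_nonneg_right (by linarith) hQnn
      have step2 : (1 - ε) * ((b-a)⁻¹ * ∫ t in Ioo a b, |g t| ^ p)
          ≤ (1-ε) * (lam^(1-p) * ((b-a)⁻¹ * ∫ t in Ioo a b, |g t - g x| ^ p)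
              + (1-lam)^(1-p) * |g x|^p) :=
        mul_le_mul_of_nonneg_left hkey2 h1ε.le
      have step3 : (1-ε) * (lam^(1-p) * ((b-a)⁻¹ * ∫ t in Ioo a b, |g t - g x| ^ p)
              + (1-lam)^(1-p) * |g x|^p)
          ≤ (1-ε) * (lam^(1-p) * (θ * |g x|^p) + (1-lam)^(1-p) * |g x|^p) := by
        apply mul_le_mul_of_nonneg_left _ h1ε.le
        refine add_le_add ?_ le_rfl
        exact mul_le_mul_of_nonneg_left hRθ hlampow.le
      have final : (1-ε) * (lam^(1-p) * (θ * |g x|^p) + (1-lam)^(1-p) * |g x|^p)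
          = |g x|^p := by
        have expand : (1-ε) * (lam^(1-p) * (θ * |g x|^p)) = (ε/2) * |g x|^p := by
          have h3 : (1-ε) * (lam^(1-p) * ((ε / 2 * lam ^ (p - 1) / (1 - ε)) * |g x|^p))
              = (lam^(1-p) * lam^(p-1)) * ((ε/2) * |g x|^p) := by
            field_simp
          rw [hθdef, h3, hlam_id, one_mul]
        have expand2 : (1-ε) * ((1-lam)^(1-p) * |g x|^p) = (1 - ε/2) * |g x|^p := by
          rw [← mul_assoc, id2]
        linear_combination expand + expand2
      linarith [step1, step2, step3]
end

section
/- (Claim 2, scaled lower bound near an affine function.) Let p ≥ 1. For every ε > 0 there exist positive constants δ̂_1 and δ̂_2 such that for every c, d ∈ ℝ, every bounded open interval I′ ⊆ ℝ of length |I′| > 0, and every f ∈ L^p(I′) satisfying (1/|I′|)·∫_{I′} |f(y) − (c·y + d)|^p dy < δ̂_1·|c|^p·|I′|^p, one has Λ_δ(f, I′) ≥ (κ − ε)·|c|^p·|I′| for every δ ∈ (0, δ̂_2·|c|·|I′|). -/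
open MeasureTheory Filter Topology Set
open scoped ENNReal NNReal

noncomputable def affEq (a L : ℝ) (hL : L ≠ 0) : ℝ ≃ᵐ ℝ :=
{ toEquiv :=
  { toFun := fun t => a + L * t
    invFun := fun x => (x - a) / L
    left_inv := fun t => by field_simp; ring
    right_inv := fun x => by field_simp; ring },
  measurable_toFun := by
    simp only [Equiv.coe_fn_mk]
    exact (measurable_id.const_mul L).const_add a
  measurable_invFun := by
    simp only [Equiv.coe_fn_symm_mk]
    exact (measurable_id.sub_const a).div_const L }

lemma affEmb (a L : ℝ) (hL : L ≠ 0) :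
    MeasurableEmbedding (fun t : ℝ => a + L * t) :=
  (affEq a L hL).measurableEmbedding

lemma map_affine (a L : ℝ) (hL : L ≠ 0) :
    Measure.map (fun t : ℝ => a + L * t) volume = ENNReal.ofReal |L⁻¹| • volume := by
  have h : (fun t : ℝ => a + L * t) = (fun x : ℝ => a + x) ∘ (fun t : ℝ => L * t) := rfl
  rw [h, ← Measure.map_map (by fun_prop : Measurable (fun x : ℝ => a + x)) (by fun_prop : Measurable (fun t : ℝ => L * t)),
    Real.map_volume_mul_left hL, Measure.map_smul, map_add_left_eq_self]

lemma restrict_affine (a L : ℝ) (hL : L ≠ 0) (s : Set ℝ) (hs : MeasurableSet s) :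
    (volume : Measure ℝ).restrict s
      = ENNReal.ofReal |L| •
        Measure.map (fun t : ℝ => a + L * t) (volume.restrict ((fun t : ℝ => a + L * t) ⁻¹' s)) := by
  rw [← Measure.restrict_map (by fun_prop : Measurable (fun t : ℝ => a + L * t)) hs,
    map_affine a L hL, Measure.restrict_smul, smul_smul, ← ENNReal.ofReal_mul (abs_nonneg L),
    abs_inv, mul_inv_cancel₀ (abs_ne_zero.mpr hL), ENNReal.ofReal_one, one_smul]

lemma lintegral_affine (a L : ℝ) (hL : L ≠ 0) (s : Set ℝ) (hs : MeasurableSet s) (g : ℝ → ℝ≥0∞) :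
    ∫⁻ x in s, g x
      = ENNReal.ofReal |L| * ∫⁻ t in (fun t : ℝ => a + L * t) ⁻¹' s, g (a + L * t) := by
  conv_lhs => rw [restrict_affine a L hL s hs]
  rw [lintegral_smul_measure, (affEmb a L hL).lintegral_map, smul_eq_mul]

lemma integral_affine (a L : ℝ) (hL : L ≠ 0) (s : Set ℝ) (hs : MeasurableSet s) (g : ℝ → ℝ) :
    ∫ x in s, g x
      = |L| * ∫ t in (fun t : ℝ => a + L * t) ⁻¹' s, g (a + L * t) := by
  conv_lhs => rw [restrict_affine a L hL s hs]
  rw [integral_smul_measure, (affEmb a L hL).integral_map,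
    ENNReal.toReal_ofReal (abs_nonneg L), smul_eq_mul]

lemma memLp_affine {q : ℝ≥0∞} (a L : ℝ) (hL : L ≠ 0) (s : Set ℝ) (hs : MeasurableSet s)
    {g : ℝ → ℝ} (hg : MemLp g q (volume.restrict s)) :
    MemLp (fun t : ℝ => g (a + L * t)) q
      (volume.restrict ((fun t : ℝ => a + L * t) ⁻¹' s)) := by
  rw [restrict_affine a L hL s hs] at hg
  have h2 : MemLp g q
      (Measure.map (fun t : ℝ => a + L * t) (volume.restrict ((fun t : ℝ => a + L * t) ⁻¹' s))) := by
    have := hg.smul_measure (c := ENNReal.ofReal |L|⁻¹) ENNReal.ofReal_ne_top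
    rwa [smul_smul, ← ENNReal.ofReal_mul (by positivity),
      inv_mul_cancel₀ (abs_ne_zero.mpr hL), ENNReal.ofReal_one, one_smul] at this
  exact ((affEmb a L hL).memLp_map_measure_iff).mp h2

lemma preimage_Ioo (a L : ℝ) (hL : 0 < L) :
    (fun t : ℝ => a + L * t) ⁻¹' Ioo a (a + L) = Ioo 0 1 := by
  ext t; simp only [mem_preimage, mem_Ioo]
  constructor
  · rintro ⟨h1, h2⟩; constructor <;> nlinarith
  · rintro ⟨h1, h2⟩; constructor <;> nlinarith

lemma Lam_scale (phi : ℝ → ℝ) (p : ℝ) (u : ℝ → ℝ) (a L : ℝ) (hL : 0 < L) :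
    Lam phi p (Ioo a (a + L)) u
      = ENNReal.ofReal (L ^ (1 - p)) *
        ∫⁻ s in Ioo (0:ℝ) 1, ∫⁻ t in Ioo (0:ℝ) 1,
          ENNReal.ofReal (phi |u (a + L * s) - u (a + L * t)| / |s - t| ^ (p + 1)) := by
  have hLp : (0:ℝ) < L ^ p := Real.rpow_pos_of_pos hL p
  have key : ∀ s t : ℝ,
      phi |u (a + L * s) - u (a + L * t)| / |a + L * s - (a + L * t)| ^ (p + 1)
        = (L ^ (p+1))⁻¹ * (phi |u (a + L * s) - u (a + L * t)| / |s - t| ^ (p + 1)) := by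
    intro s t
    have h1 : |a + L * s - (a + L * t)| = L * |s - t| := by
      rw [show a + L * s - (a + L * t) = L * (s - t) by ring, abs_mul, abs_of_pos hL]
    rw [h1, Real.mul_rpow hL.le (abs_nonneg _), div_mul_eq_div_div_swap, div_eq_inv_mul]
  have step : ∀ s : ℝ,
      (∫⁻ y in Ioo a (a + L),
          ENNReal.ofReal (phi |u (a + L * s) - u y| / |a + L * s - y| ^ (p + 1)))
        = ENNReal.ofReal (L * (L ^ (p+1))⁻¹) *
          ∫⁻ t in Ioo (0:ℝ) 1,
            ENNReal.ofReal (phi |u (a + L * s) - u (a + L * t)| / |s - t| ^ (p + 1)) := by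
    intro s
    rw [lintegral_affine a L hL.ne' _ measurableSet_Ioo, preimage_Ioo a L hL, abs_of_pos hL,
      ENNReal.ofReal_mul hL.le, mul_assoc]
    congr 1
    rw [← lintegral_const_mul' _ _ ENNReal.ofReal_ne_top]
    refine lintegral_congr fun t => ?_
    rw [key s t, ENNReal.ofReal_mul (by positivity)]
  unfold Lam
  rw [lintegral_affine a L hL.ne' _ measurableSet_Ioo, preimage_Ioo a L hL, abs_of_pos hL,
    lintegral_congr step, lintegral_const_mul' _ _ ENNReal.ofReal_ne_top, ← mul_assoc,
    ← ENNReal.ofReal_mul hL.le]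
  congr 2
  have h1 : L ^ (p+1) = L ^ p * L := by rw [Real.rpow_add hL, Real.rpow_one]
  rw [h1, Real.rpow_sub hL, Real.rpow_one]
  field_simp

lemma tail_integral (p β : ℝ) (hp : 1 ≤ p) (hβ : 0 ≤ β) (δ : ℝ) (hδ : 0 < δ) :
    ∫⁻ t in Ioi δ, ENNReal.ofReal (β * t ^ (-(p+1)))
      = ENNReal.ofReal (β * (δ ^ (-p) / p)) := by
  have hlt : -(p+1) < -1 := by linarith
  have hInt : Integrable (fun t : ℝ => β * t ^ (-(p+1))) (volume.restrict (Ioi δ)) :=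
    (integrableOn_Ioi_rpow_of_lt hlt hδ).const_mul β
  have hnn : 0 ≤ᵐ[volume.restrict (Ioi δ)] fun t : ℝ => β * t ^ (-(p+1)) :=
    (ae_restrict_mem measurableSet_Ioi).mono fun t ht => by
      have h0 : (0:ℝ) ≤ t := le_of_lt (lt_trans hδ ht)
      positivity
  rw [← ofReal_integral_eq_lintegral_ofReal hInt hnn]
  congr 1
  rw [integral_const_mul, integral_Ioi_rpow_of_lt hlt hδ]
  have h1 : -(p+1) + 1 = -p := by ring
  rw [h1]
  have hp0 : p ≠ 0 := by linarith
  field_simp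

lemma inner_bound (phi : ℝ → ℝ) (p α β : ℝ) (hp : 1 ≤ p) (hα : 0 < α) (hβ : 0 < β)
    (hphi0 : phi 0 = 0) (hnn : ∀ t, 0 ≤ t → 0 ≤ phi t)
    (hphi1 : ∀ t ∈ Icc (0:ℝ) 1, phi t ≤ α * t ^ (p+1))
    (hphi2 : ∀ t, 0 ≤ t → phi t ≤ β)
    (δ : ℝ) (hδ : 0 < δ) (x : ℝ) :
    ∫⁻ y in Ioo (0:ℝ) 1, ENNReal.ofReal (phi (|x - y| / δ) / |x - y| ^ (p+1))
      ≤ ENNReal.ofReal (2*α*δ^(-p) + 2*(β*(δ^(-p)/p))) := by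
  have hp0 : (0:ℝ) < p := by linarith
  have hδp : (0:ℝ) < δ ^ (p+1) := Real.rpow_pos_of_pos hδ _
  set S : Set ℝ := Iio (x - δ) ∪ Ioi (x + δ) with hSdef
  have hSmeas : MeasurableSet S := measurableSet_Iio.union measurableSet_Ioi
  set G : ℝ → ℝ≥0∞ := (Icc (x-δ) (x+δ)).indicator (fun _ => ENNReal.ofReal (α / δ^(p+1))) with hGdef
  set H : ℝ → ℝ≥0∞ := S.indicator (fun y => ENNReal.ofReal (β / |x - y| ^ (p+1))) with hHdef
  have hmemS : ∀ y : ℝ, y ∈ S ↔ δ < |x - y| := by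
    intro y
    simp only [hSdef, mem_union, mem_Iio, mem_Ioi, lt_abs]
    constructor
    · rintro (h | h) <;> [left; right] <;> linarith
    · rintro (h | h) <;> [left; right] <;> linarith
  have ptwise : ∀ y : ℝ,
      ENNReal.ofReal (phi (|x - y| / δ) / |x - y| ^ (p+1)) ≤ G y + H y := by
    intro y
    by_cases h : |x - y| ≤ δ
    · have hyIcc : y ∈ Icc (x-δ) (x+δ) := by
        rw [mem_Icc]
        rw [abs_le] at h
        constructor <;> linarith [h.1, h.2]
      have hyS : y ∉ S := fun hy => absurd ((hmemS y).mp hy) (not_lt.mpr h)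
      rw [hGdef, hHdef, indicator_of_mem hyIcc, indicator_of_notMem hyS, add_zero]
      apply ENNReal.ofReal_le_ofReal
      rcases eq_or_lt_of_le (abs_nonneg (x - y)) with h0 | h0
      · rw [← h0, Real.zero_rpow (by linarith : p + 1 ≠ 0), div_zero]
        positivity
      · have ht1 : |x - y| / δ ∈ Icc (0:ℝ) 1 := by
          constructor
          · positivity
          · rw [div_le_one hδ]; exact h
        have h2 : phi (|x - y| / δ) ≤ α * (|x - y| ^ (p+1) / δ ^ (p+1)) := by
          have := hphi1 _ ht1
          rwa [Real.div_rpow (abs_nonneg _) hδ.le] at this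
        have hr : (0:ℝ) < |x - y| ^ (p+1) := Real.rpow_pos_of_pos h0 _
        rw [div_le_div_iff₀ hr hδp]
        calc phi (|x - y| / δ) * δ ^ (p+1)
            ≤ (α * (|x - y| ^ (p+1) / δ ^ (p+1))) * δ ^ (p+1) := by
              exact mul_le_mul_of_nonneg_right h2 hδp.le
          _ = α * |x - y| ^ (p+1) := by field_simp
    · push_neg at h
      have hyS : y ∈ S := (hmemS y).mpr h
      have hyIcc : y ∉ Icc (x-δ) (x+δ) := by
        rw [mem_Icc]
        rw [lt_abs] at h
        rcases h with h | h
        · intro hc; linarith [hc.2]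
        · intro hc; linarith [hc.1]
      rw [hGdef, hHdef, indicator_of_mem hyS, indicator_of_notMem hyIcc, zero_add]
      apply ENNReal.ofReal_le_ofReal
      have hr : (0:ℝ) < |x - y| := lt_trans hδ h
      gcongr
      exact hphi2 _ (by positivity)
  calc ∫⁻ y in Ioo (0:ℝ) 1, ENNReal.ofReal (phi (|x - y| / δ) / |x - y| ^ (p+1))
      ≤ ∫⁻ y in Ioo (0:ℝ) 1, (G y + H y) := lintegral_mono ptwise
    _ = (∫⁻ y in Ioo (0:ℝ) 1, G y) + ∫⁻ y in Ioo (0:ℝ) 1, H y := by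
        rw [lintegral_add_left]
        exact measurable_const.indicator measurableSet_Icc
    _ ≤ ENNReal.ofReal (2*α*δ^(-p)) + ENNReal.ofReal (2*(β*(δ^(-p)/p))) := by
        gcongr
        · -- G part
          rw [hGdef, lintegral_indicator measurableSet_Icc, setLIntegral_const]
          calc ENNReal.ofReal (α / δ^(p+1)) * (volume.restrict (Ioo (0:ℝ) 1)) (Icc (x-δ) (x+δ))
              ≤ ENNReal.ofReal (α / δ^(p+1)) * volume (Icc (x-δ) (x+δ)) := by
                exact mul_le_mul_right (Measure.restrict_le_self _) _
            _ = ENNReal.ofReal (α / δ^(p+1)) * ENNReal.ofReal (2*δ) := by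
                rw [Real.volume_Icc]; ring_nf
            _ = ENNReal.ofReal (2*α*δ^(-p)) := by
                rw [← ENNReal.ofReal_mul (by positivity)]
                congr 1
                have h1 : δ ^ (p+1) = δ ^ p * δ := by rw [Real.rpow_add hδ, Real.rpow_one]
                rw [h1, Real.rpow_neg hδ.le]
                have : δ ^ p ≠ 0 := (Real.rpow_pos_of_pos hδ p).ne'
                field_simp
        · -- H part
          calc ∫⁻ y in Ioo (0:ℝ) 1, H y
              ≤ ∫⁻ y, H y := lintegral_mono' Measure.restrict_le_self le_rfl
            _ = ∫⁻ y in S, ENNReal.ofReal (β / |x - y| ^ (p+1)) := by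
                rw [hHdef, lintegral_indicator hSmeas]
            _ = (∫⁻ y in Iio (x - δ), ENNReal.ofReal (β / |x - y| ^ (p+1)))
                + ∫⁻ y in Ioi (x + δ), ENNReal.ofReal (β / |x - y| ^ (p+1)) := by
                rw [hSdef, lintegral_union measurableSet_Ioi]
                exact Set.disjoint_left.mpr (fun {y} hy1 hy2 => by have h1 := mem_Iio.mp hy1; have h2 := mem_Ioi.mp hy2; linarith)
            _ = ENNReal.ofReal (β * (δ^(-p)/p)) + ENNReal.ofReal (β * (δ^(-p)/p)) := by
                congr 1
                · -- left piece, reflection t ↦ x + (-1) * t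
                  rw [lintegral_affine x (-1) (by norm_num) _ measurableSet_Iio]
                  have hpre : (fun t : ℝ => x + (-1) * t) ⁻¹' Iio (x - δ) = Ioi δ := by
                    ext t; simp only [mem_preimage, mem_Iio, mem_Ioi]; constructor <;> intro h <;> linarith
                  rw [hpre]
                  simp only [abs_neg, abs_one, ENNReal.ofReal_one, one_mul]
                  rw [← tail_integral p β hp hβ.le δ hδ]
                  refine setLIntegral_congr_fun measurableSet_Ioi (fun t ht => ?_)
                  have h1 : |x - (x + (-1) * t)| = t := by
                    rw [show x - (x + (-1) * t) = t by ring, abs_of_pos (lt_trans hδ ht)]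
                  rw [h1, Real.rpow_neg (le_of_lt (lt_trans hδ ht)), div_eq_mul_inv]
                · -- right piece, translation t ↦ x + 1 * t
                  rw [lintegral_affine x 1 one_ne_zero _ measurableSet_Ioi]
                  have hpre : (fun t : ℝ => x + 1 * t) ⁻¹' Ioi (x + δ) = Ioi δ := by
                    ext t; simp only [mem_preimage, mem_Ioi]; constructor <;> intro h <;> linarith
                  rw [hpre]
                  simp only [abs_one, ENNReal.ofReal_one, one_mul]
                  rw [← tail_integral p β hp hβ.le δ hδ]
                  refine setLIntegral_congr_fun measurableSet_Ioi (fun t ht => ?_)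
                  have h1 : |x - (x + t)| = t := by
                    rw [show x - (x + t) = -t by ring, abs_neg, abs_of_pos (lt_trans hδ ht)]
                  rw [h1, Real.rpow_neg (le_of_lt (lt_trans hδ ht)), div_eq_mul_inv]
            _ = ENNReal.ofReal (2*(β*(δ^(-p)/p))) := by
                rw [← ENNReal.ofReal_add (by positivity) (by positivity)]
                congr 1; ring
    _ = ENNReal.ofReal (2*α*δ^(-p) + 2*(β*(δ^(-p)/p))) := by
        rw [← ENNReal.ofReal_add (by positivity) (by positivity)]

lemma memLp_id (q : ℝ≥0∞) : MemLp (fun x : ℝ => x) q (volume.restrict (Ioo 0 1)) := by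
  haveI : IsFiniteMeasure (volume.restrict (Ioo (0:ℝ) 1)) := by
    constructor
    rw [Measure.restrict_apply_univ]
    simp [Real.volume_Ioo]
  refine MemLp.of_bound measurable_id.aestronglyMeasurable 1 ?_
  refine (ae_restrict_mem measurableSet_Ioo).mono fun x hx => ?_
  rw [Real.norm_eq_abs, abs_of_pos hx.1]
  exact hx.2.le

lemma LamD_id_bound (phi : ℝ → ℝ) (p α β : ℝ) (hp : 1 ≤ p) (hα : 0 < α) (hβ : 0 < β)
    (hphi0 : phi 0 = 0) (hnn : ∀ t, 0 ≤ t → 0 ≤ phi t)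
    (hphi1 : ∀ t ∈ Icc (0:ℝ) 1, phi t ≤ α * t ^ (p+1))
    (hphi2 : ∀ t, 0 ≤ t → phi t ≤ β)
    (δ : ℝ) (hδ : 0 < δ) :
    LamD phi p δ (Ioo 0 1) (fun x => x) ≤ ENNReal.ofReal (2*α + 2*β/p) := by
  have hp0 : (0:ℝ) < p := by linarith
  have hδp : (0:ℝ) < δ ^ p := Real.rpow_pos_of_pos hδ p
  unfold LamD Lam
  have hcong : ∀ x : ℝ,
      (∫⁻ y in Ioo (0:ℝ) 1, ENNReal.ofReal (phi |x / δ - y / δ| / |x - y| ^ (p + 1)))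
        = ∫⁻ y in Ioo (0:ℝ) 1, ENNReal.ofReal (phi (|x - y| / δ) / |x - y| ^ (p + 1)) := by
    intro x
    refine lintegral_congr fun y => ?_
    rw [show x / δ - y / δ = (x - y)/δ by ring, abs_div, abs_of_pos hδ]
  calc ENNReal.ofReal (δ ^ p) *
        ∫⁻ x in Ioo (0:ℝ) 1, ∫⁻ y in Ioo (0:ℝ) 1,
          ENNReal.ofReal (phi |x / δ - y / δ| / |x - y| ^ (p + 1))
      ≤ ENNReal.ofReal (δ ^ p) *
        ∫⁻ _x in Ioo (0:ℝ) 1, ENNReal.ofReal (2*α*δ^(-p) + 2*(β*(δ^(-p)/p))) := by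
        refine mul_le_mul_right (lintegral_mono' le_rfl fun x => ?_) _
        rw [hcong x]
        exact inner_bound phi p α β hp hα hβ hphi0 hnn hphi1 hphi2 δ hδ x
    _ = ENNReal.ofReal (δ ^ p) * ENNReal.ofReal (2*α*δ^(-p) + 2*(β*(δ^(-p)/p))) := by
        rw [setLIntegral_const]
        simp [Real.volume_Ioo]
    _ = ENNReal.ofReal (2*α + 2*β/p) := by
        rw [← ENNReal.ofReal_mul hδp.le]
        congr 1
        rw [Real.rpow_neg hδ.le]
        field_simp

lemma kapp_ne_top (phi : ℝ → ℝ) (p α β : ℝ) (hp : 1 ≤ p) (hα : 0 < α) (hβ : 0 < β)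
    (hphi0 : phi 0 = 0) (hnn : ∀ t, 0 ≤ t → 0 ≤ phi t)
    (hphi1 : ∀ t ∈ Icc (0:ℝ) 1, phi t ≤ α * t ^ (p+1))
    (hphi2 : ∀ t, 0 ≤ t → phi t ≤ β) :
    kapp phi p ≠ ⊤ := by
  have hw : TendstoLp p (Ioo 0 1) (fun _ x => x) (fun x => x) := by
    constructor
    · intro δ _; exact memLp_id _
    · have h0 : (fun δ : ℝ => eLpNorm (fun x : ℝ => x - x) (ENNReal.ofReal p)
          (volume.restrict (Ioo 0 1))) = fun _ => (0:ℝ≥0∞) := by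
        funext δ
        have : (fun x : ℝ => x - x) = (0 : ℝ → ℝ) := by funext x; simp
        rw [this, eLpNorm_zero]
      rw [h0]
      exact tendsto_const_nhds
  have h2 : kapp phi p ≤ liminf (fun δ => LamD phi p δ (Ioo 0 1) ((fun _ x => x) δ)) (𝓝[>] 0) := by
    unfold kapp
    exact iInf₂_le (fun _ x => x) hw
  have h1 : kapp phi p ≤ ENNReal.ofReal (2*α + 2*β/p) := by
    have hfreq : ∃ᶠ δ in 𝓝[>] (0:ℝ),
        LamD phi p δ (Ioo 0 1) (fun x => x) ≤ ENNReal.ofReal (2*α + 2*β/p) := by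
      refine Filter.Eventually.frequently ?_
      filter_upwards [self_mem_nhdsWithin] with δ hδ
      exact LamD_id_bound phi p α β hp hα hβ hphi0 hnn hphi1 hphi2 δ hδ
    exact h2.trans (Filter.liminf_le_of_frequently_le' hfreq)
  exact (lt_of_le_of_lt h1 ENNReal.ofReal_lt_top).ne

lemma eLpNorm_sub_le (p : ℝ) (hp : 1 ≤ p) {g : ℝ → ℝ}
    (hg : MemLp g (ENNReal.ofReal p) (volume.restrict (Ioo 0 1)))
    {C : ℝ} (hC : (∫ x in Ioo (0:ℝ) 1, |g x - x| ^ p) ≤ C) :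
    eLpNorm (fun x => g x - x) (ENNReal.ofReal p) (volume.restrict (Ioo 0 1))
      ≤ ENNReal.ofReal C ^ p⁻¹ := by
  set μ := volume.restrict (Ioo (0:ℝ) 1)
  have hp0 : (0:ℝ) < p := by linarith
  have hq0 : ENNReal.ofReal p ≠ 0 := by
    simp only [ne_eq, ENNReal.ofReal_eq_zero, not_le]; exact hp0
  have hqt : ENNReal.ofReal p ≠ ⊤ := ENNReal.ofReal_ne_top
  have htr : (ENNReal.ofReal p).toReal = p := ENNReal.toReal_ofReal hp0.le
  have hsub : MemLp (fun x : ℝ => g x - x) (ENNReal.ofReal p) μ := hg.sub (memLp_id _)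
  have hInt : Integrable (fun x : ℝ => |g x - x| ^ p) μ := by
    have := hsub.integrable_norm_rpow hq0 hqt
    simpa [Real.norm_eq_abs, htr] using this
  have hlin : ENNReal.ofReal (∫ x, |g x - x| ^ p ∂μ)
      = ∫⁻ x, ‖g x - x‖ₑ ^ p ∂μ := by
    rw [ofReal_integral_eq_lintegral_ofReal hInt (ae_of_all _ fun x => by positivity)]
    refine lintegral_congr fun x => ?_
    rw [← ofReal_norm, Real.norm_eq_abs,
      ENNReal.ofReal_rpow_of_nonneg (abs_nonneg _) hp0.le]
  rw [eLpNorm_eq_lintegral_rpow_enorm_toReal hq0 hqt, htr, ← hlin, one_div]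
  exact ENNReal.rpow_le_rpow (ENNReal.ofReal_le_ofReal hC) (by positivity)

lemma exists_seq {α : Type} (Q : ℝ → α → Prop) (g : α → ℝ)
    (hmono : ∀ d₁ d₂ x, d₁ ≤ d₂ → Q d₁ x → Q d₂ x)
    (hex : ∀ dd : ℝ, 0 < dd → ∃ x, 0 < g x ∧ g x < dd ∧ Q dd x) :
    ∃ s : ℕ → α, (∀ n, 0 < g (s n)) ∧ (∀ n : ℕ, g (s n) < 1/((n:ℝ)+1)) ∧
      (∀ n, g (s (n+1)) < g (s n)) ∧ ∀ n : ℕ, Q (1/((n:ℝ)+1)) (s n) := by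
  choose F h1 h2 h3 using hex
  let step : ℕ → {x : α // 0 < g x} → {x : α // 0 < g x} := fun n prev =>
    ⟨F (min (1/((n:ℝ)+1+1)) (g prev.1)) (lt_min (by positivity) prev.2),
      h1 _ (lt_min (by positivity) prev.2)⟩
  let E : ℕ → {x : α // 0 < g x} :=
    fun n => Nat.rec ⟨F 1 one_pos, h1 1 one_pos⟩ step n
  refine ⟨fun n => (E n).1, fun n => (E n).2, ?_, ?_, ?_⟩
  · intro n
    cases n with
    | zero =>
      have := h2 1 one_pos
      norm_num
      exact this
    | succ m =>
      have hstep : E (m+1) = step m (E m) := rfl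
      beta_reduce
      rw [hstep]
      have hh := h2 _ (lt_min (b := 1/((m:ℝ)+1+1)) (by positivity) (E m).2)
      refine lt_of_lt_of_le hh ?_
      refine (min_le_left _ _).trans ?_
      push_cast
      ring_nf
      exact le_refl _
  · intro n
    have hstep : E (n+1) = step n (E n) := rfl
    beta_reduce
    rw [hstep]
    have hh := h2 _ (lt_min (b := 1/((n:ℝ)+1+1)) (by positivity) (E n).2)
    exact lt_of_lt_of_le hh (min_le_right _ _)
  · intro n
    cases n with
    | zero =>
      have := h3 1 one_pos
      norm_num
      exact this
    | succ m =>
      have hstep : E (m+1) = step m (E m) := rfl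
      beta_reduce
      rw [hstep]
      refine hmono _ _ _ ?_ (h3 _ (lt_min (b := 1/((m:ℝ)+1+1)) (by positivity) (E m).2))
      refine (min_le_left _ _).trans ?_
      push_cast
      ring_nf
      exact le_refl _

lemma rescale_key (phi : ℝ → ℝ) (p : ℝ) (hp : 1 ≤ p)
    (c d a b : ℝ) (hab : a < b) (hc : c ≠ 0) (f : ℝ → ℝ)
    (hf : MemLp f (ENNReal.ofReal p) (volume.restrict (Ioo a b)))
    (dd : ℝ)
    (hclose : (b - a)⁻¹ * ∫ y in Ioo a b, |f y - (c * y + d)| ^ p < dd * |c| ^ p * (b - a) ^ p)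
    (δ : ℝ) (hδ0 : 0 < δ) (X : ℝ≥0∞)
    (hlt : LamD phi p δ (Ioo a b) f < X * ENNReal.ofReal (|c| ^ p * (b - a))) :
    ∃ v : ℝ → ℝ, MemLp v (ENNReal.ofReal p) (volume.restrict (Ioo 0 1)) ∧
      (∫ x in Ioo (0:ℝ) 1, |v x - x| ^ p) < dd ∧
      LamD phi p (δ / (|c| * (b - a))) (Ioo 0 1) v < X := by
  set L : ℝ := b - a with hLdef
  have hL : 0 < L := by simp [hLdef]; linarith
  have hcpos : 0 < |c| := abs_pos.mpr hc
  have hcL : 0 < |c| * L := mul_pos hcpos hL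
  have hIoo : Ioo a b = Ioo a (a + L) := by rw [show a + L = b by rw [hLdef]; ring]
  set δ' : ℝ := δ / (|c| * L) with hδ'def
  have hδ' : 0 < δ' := div_pos hδ0 hcL
  set v : ℝ → ℝ := fun s => (f (a + L * s) - (c * a + d)) / (c * L) with hvdef
  refine ⟨v, ?_, ?_, ?_⟩
  · -- MemLp
    have h1 : MemLp (fun t : ℝ => f (a + L * t)) (ENNReal.ofReal p)
        (volume.restrict (Ioo 0 1)) := by
      have h := memLp_affine a L hL.ne' (Ioo a b) measurableSet_Ioo hf
      rwa [hIoo, preimage_Ioo a L hL] at h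
    have h3 := (h1.sub (memLp_const (c * a + d))).const_mul (c * L)⁻¹
    have hveq : v = fun x => (c * L)⁻¹ * ((fun t : ℝ => f (a + L * t)) x - (c * a + d)) := by
      funext x
      exact div_eq_inv_mul _ _
    rw [hveq]
    exact h3
  · -- closeness
    have hcLp : (0:ℝ) < (|c| * L) ^ p := Real.rpow_pos_of_pos hcL p
    have hptw : ∀ x : ℝ,
        |v x - x| ^ p = ((|c| * L) ^ p)⁻¹ * |f (a + L * x) - (c * (a + L * x) + d)| ^ p := by
      intro x
      have h4 : v x - x = (f (a + L * x) - (c * (a + L * x) + d)) / (c * L) := by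
        rw [hvdef]
        field_simp
        ring
      rw [h4, abs_div, Real.div_rpow (abs_nonneg _) (abs_nonneg _), abs_mul,
        abs_of_pos hL, div_eq_inv_mul]
    have hint : (∫ x in Ioo (0:ℝ) 1, |v x - x| ^ p)
        = ((|c| * L) ^ p)⁻¹ * (L⁻¹ * ∫ y in Ioo a b, |f y - (c * y + d)| ^ p) := by
      rw [integral_congr_ae (ae_of_all _ hptw), integral_const_mul]
      congr 1
      have h5 := integral_affine a L hL.ne' (Ioo a b) measurableSet_Ioo
        (fun y => |f y - (c * y + d)| ^ p)
      rw [show ((fun t : ℝ => a + L * t) ⁻¹' Ioo a b) = Ioo 0 1 by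
        rw [hIoo]; exact preimage_Ioo a L hL] at h5
      rw [h5, abs_of_pos hL, ← mul_assoc, inv_mul_cancel₀ hL.ne', one_mul]
    rw [hint]
    calc ((|c| * L) ^ p)⁻¹ * (L⁻¹ * ∫ y in Ioo a b, |f y - (c * y + d)| ^ p)
        < ((|c| * L) ^ p)⁻¹ * (dd * |c| ^ p * L ^ p) := by
          exact mul_lt_mul_of_pos_left hclose (by positivity)
      _ = dd := by
          rw [Real.mul_rpow (abs_nonneg c) hL.le]
          field_simp
  · -- LamD inequality
    have hLam : LamD phi p δ (Ioo a b) f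
        = ENNReal.ofReal (|c| ^ p * L) * LamD phi p δ' (Ioo 0 1) v := by
      unfold LamD
      rw [hIoo, Lam_scale phi p (fun x => f x / δ) a L hL]
      unfold Lam
      have hptw2 : ∀ s t : ℝ,
          phi |f (a + L * s) / δ - f (a + L * t) / δ| = phi |v s / δ' - v t / δ'| := by
        intro s t
        congr 1
        have hA : v s / δ' - v t / δ' = (f (a + L * s) - f (a + L * t)) / (c * L * δ') := by
          rw [hvdef]
          field_simp
          ring
        have hB : f (a + L * s) / δ - f (a + L * t) / δ
            = (f (a + L * s) - f (a + L * t)) / δ := by ring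
        rw [hA, hB, abs_div, abs_div]
        congr 1
        rw [abs_mul, abs_mul, abs_of_pos hL, abs_of_pos hδ', abs_of_pos hδ0, hδ'def]
        field_simp
      have hJ : (∫⁻ s in Ioo (0:ℝ) 1, ∫⁻ t in Ioo (0:ℝ) 1,
            ENNReal.ofReal (phi |f (a + L * s) / δ - f (a + L * t) / δ| / |s - t| ^ (p + 1)))
          = ∫⁻ s in Ioo (0:ℝ) 1, ∫⁻ t in Ioo (0:ℝ) 1,
            ENNReal.ofReal (phi |v s / δ' - v t / δ'| / |s - t| ^ (p + 1)) := by
        refine lintegral_congr fun s => lintegral_congr fun t => ?_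
        rw [hptw2 s t]
      rw [hJ, ← mul_assoc, ← mul_assoc, ← ENNReal.ofReal_mul (by positivity),
        ← ENNReal.ofReal_mul (by positivity)]
      congr 2
      -- δ ^ p * L ^ (1 - p) = |c| ^ p * L * δ' ^ p
      rw [hδ'def, Real.div_rpow hδ0.le hcL.le, Real.mul_rpow (abs_nonneg c) hL.le,
        Real.rpow_sub hL, Real.rpow_one]
      have h6 : (0:ℝ) < L ^ p := Real.rpow_pos_of_pos hL p
      have h7 : (0:ℝ) < |c| ^ p := Real.rpow_pos_of_pos hcpos p
      field_simp
    rw [hLam, mul_comm X _] at hlt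
    exact (ENNReal.mul_right_strictMono (by simp [ENNReal.ofReal_eq_zero, not_le]; positivity)
      ENNReal.ofReal_ne_top).lt_iff_lt.mp hlt

set_option maxHeartbeats 1000000 in
/-- Claim 2: scaled lower bound near an affine function. -/
theorem claim_2 (p α β : ℝ) (hp : 1 ≤ p) (hα : 0 < α) (hβ : 0 < β)
    (phi : ℝ → ℝ) (hphi : PhiOK phi p α β) :
    ∀ ε : ℝ, 0 < ε → ∃ d1 : ℝ, 0 < d1 ∧ ∃ d2 : ℝ, 0 < d2 ∧
      ∀ c d a b : ℝ, a < b →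
      ∀ f : ℝ → ℝ, MemLp f (ENNReal.ofReal p) (volume.restrict (Ioo a b)) →
      ((b - a)⁻¹ * ∫ y in Ioo a b, |f y - (c * y + d)| ^ p)
        < d1 * |c| ^ p * (b - a) ^ p →
      ∀ δ : ℝ, 0 < δ → δ < d2 * |c| * (b - a) →
      (kapp phi p - ENNReal.ofReal ε) * ENNReal.ofReal (|c| ^ p * (b - a))
        ≤ LamD phi p δ (Ioo a b) f := by
  obtain ⟨hphi0, hnn, -, hphi1, hphi2, -⟩ := hphi
  intro ε hε
  by_cases hbig : kapp phi p ≤ ENNReal.ofReal ε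
  · refine ⟨1, one_pos, 1, one_pos, ?_⟩
    intro c d a b hab f hf hcl δ hδ0 hδ2
    rw [tsub_eq_zero_of_le hbig, zero_mul]
    exact zero_le
  push_neg at hbig
  have hκtop : kapp phi p ≠ ⊤ := kapp_ne_top phi p α β hp hα hβ hphi0 hnn hphi1 hphi2
  by_contra hcon
  push_neg at hcon
  set Q : ℝ → (ℝ × (ℝ → ℝ)) → Prop := fun dd x =>
      MemLp x.2 (ENNReal.ofReal p) (volume.restrict (Ioo 0 1)) ∧
      (∫ t in Ioo (0:ℝ) 1, |x.2 t - t| ^ p) < dd ∧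
      LamD phi p x.1 (Ioo 0 1) x.2 < kapp phi p - ENNReal.ofReal ε with hQ
  have hQmono : ∀ d₁ d₂ : ℝ, ∀ x : ℝ × (ℝ → ℝ), d₁ ≤ d₂ → Q d₁ x → Q d₂ x := by
    intro d₁ d₂ x h hq
    simp only [hQ] at hq ⊢
    exact ⟨hq.1, lt_of_lt_of_le hq.2.1 h, hq.2.2⟩
  have key : ∀ dd : ℝ, 0 < dd → ∃ x : ℝ × (ℝ → ℝ), 0 < x.1 ∧ x.1 < dd ∧ Q dd x := by
    intro dd hdd
    obtain ⟨c, d, a, b, hab, f, hf, hcl, δ, hδ0, hδ2, hlt⟩ := hcon dd hdd dd hdd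
    have hc : c ≠ 0 := by
      intro h
      rw [h] at hδ2
      simp only [abs_zero, mul_zero, zero_mul] at hδ2
      linarith
    have hcb : 0 < |c| * (b - a) := mul_pos (abs_pos.mpr hc) (by linarith)
    obtain ⟨v, hv1, hv2, hv3⟩ := rescale_key phi p hp c d a b hab hc f hf dd hcl δ hδ0 _ hlt
    refine ⟨(δ / (|c| * (b - a)), v), div_pos hδ0 hcb, ?_, by
      simp only [hQ]; exact ⟨hv1, hv2, hv3⟩⟩
    rw [div_lt_iff₀ hcb]
    calc δ < dd * |c| * (b - a) := hδ2
      _ = dd * (|c| * (b - a)) := by ring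
  obtain ⟨s, hs1, hs2, hs3, hs4⟩ := exists_seq Q Prod.fst hQmono key
  set D : ℕ → ℝ := fun n => (s n).1 with hD
  set V : ℕ → ℝ → ℝ := fun n => (s n).2 with hV
  have hDpos : ∀ n, 0 < D n := hs1
  have hanti : StrictAnti D := strictAnti_nat_of_succ_lt hs3
  have hs4' : ∀ n : ℕ, MemLp (V n) (ENNReal.ofReal p) (volume.restrict (Ioo 0 1)) ∧
      (∫ t in Ioo (0:ℝ) 1, |V n t - t| ^ p) < 1/((n:ℝ)+1) ∧
      LamD phi p (D n) (Ioo 0 1) (V n) < kapp phi p - ENNReal.ofReal ε := by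
    intro n
    have := hs4 n
    simp only [hQ] at this
    exact this
  have hMem : ∀ n, MemLp (V n) (ENNReal.ofReal p) (volume.restrict (Ioo 0 1)) :=
    fun n => (hs4' n).1
  have hCl : ∀ n, (∫ t in Ioo (0:ℝ) 1, |V n t - t| ^ p) < 1/((n:ℝ)+1) := fun n => (hs4' n).2.1
  have hLamV : ∀ n, LamD phi p (D n) (Ioo 0 1) (V n) < kapp phi p - ENNReal.ofReal ε :=
    fun n => (hs4' n).2.2
  classical
  set w : ℝ → ℝ → ℝ := fun δ => if h : ∃ n, D n = δ then V (Nat.find h) else fun x => x with hw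
  have hwD : ∀ n, w (D n) = V n := by
    intro n
    have hex : ∃ m, D m = D n := ⟨n, rfl⟩
    simp only [hw]
    rw [dif_pos hex]
    exact congrArg V (hanti.injective (Nat.find_spec hex))
  have hp0 : (0:ℝ) < p := by linarith
  have hDto : Tendsto D atTop (𝓝[>] (0:ℝ)) := by
    refine tendsto_nhdsWithin_of_tendsto_nhds_of_eventually_within _ ?_
      (Eventually.of_forall hDpos)
    exact tendsto_of_tendsto_of_tendsto_of_le_of_le tendsto_const_nhds
      tendsto_one_div_add_atTop_nhds_zero_nat (fun n => (hDpos n).le) (fun n => (hs2 n).le)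
  have hwT : TendstoLp p (Ioo 0 1) w (fun x => x) := by
    constructor
    · intro δ hδ
      simp only [hw]
      by_cases h : ∃ n, D n = δ
      · rw [dif_pos h]; exact hMem _
      · rw [dif_neg h]; exact memLp_id _
    · rw [ENNReal.tendsto_nhds_zero]
      intro η hη
      obtain ⟨K, hK⟩ : ∃ K : ℕ, ENNReal.ofReal (1/((K:ℝ)+1)) ≤ η ^ p := by
        by_cases hηtop : η = ⊤
        · exact ⟨0, by rw [hηtop, ENNReal.top_rpow_of_pos hp0]; exact le_top⟩
        · have hne : η ^ p ≠ 0 := by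
            intro h0
            rw [ENNReal.rpow_eq_zero_iff] at h0
            rcases h0 with ⟨h01, _⟩ | ⟨h01, _⟩
            · exact hη.ne' h01
            · exact hηtop h01
          have hnt : η ^ p ≠ ⊤ := ENNReal.rpow_ne_top_of_nonneg hp0.le hηtop
          have hr : 0 < (η ^ p).toReal := ENNReal.toReal_pos hne hnt
          obtain ⟨n, hn⟩ := exists_nat_one_div_lt hr
          exact ⟨n, ENNReal.ofReal_le_of_le_toReal hn.le⟩
      have hbig2 : ENNReal.ofReal (1/((K:ℝ)+1)) ^ p⁻¹ ≤ η := by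
        calc ENNReal.ofReal (1/((K:ℝ)+1)) ^ p⁻¹ ≤ (η ^ p) ^ p⁻¹ :=
            ENNReal.rpow_le_rpow hK (by positivity)
          _ = η := by
            rw [← ENNReal.rpow_mul, mul_inv_cancel₀ hp0.ne', ENNReal.rpow_one]
      filter_upwards [Ioo_mem_nhdsGT_of_mem
        (show (0:ℝ) ∈ Ico (0:ℝ) (D K) from ⟨le_refl _, hDpos K⟩)] with δ hδ
      simp only [hw]
      by_cases h : ∃ n, D n = δ
      · rw [dif_pos h]
        have hkspec : D (Nat.find h) = δ := Nat.find_spec h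
        have hkK : K ≤ Nat.find h := by
          by_contra hlt'
          push_neg at hlt'
          have h5 := hanti hlt'
          rw [hkspec] at h5
          exact absurd hδ.2 (not_lt.mpr h5.le)
        have h6 : ((K:ℝ)+1) ≤ ((Nat.find h : ℝ)+1) := by
          have : (K:ℝ) ≤ (Nat.find h : ℝ) := by exact_mod_cast hkK
          linarith
        have h1 : (∫ t in Ioo (0:ℝ) 1, |V (Nat.find h) t - t| ^ p) ≤ 1/((K:ℝ)+1) :=
          (hCl (Nat.find h)).le.trans (one_div_le_one_div_of_le (by positivity) h6)
        calc eLpNorm (fun x => V (Nat.find h) x - x) (ENNReal.ofReal p)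
              (volume.restrict (Ioo 0 1))
            ≤ ENNReal.ofReal (1/((K:ℝ)+1)) ^ p⁻¹ := eLpNorm_sub_le p hp (hMem _) h1
          _ ≤ η := hbig2
      · rw [dif_neg h]
        have h7 : (fun x : ℝ => x - x) = (0 : ℝ → ℝ) := by funext x; simp
        rw [h7, eLpNorm_zero]
        exact zero_le
  have h1 : kapp phi p ≤ liminf (fun δ => LamD phi p δ (Ioo 0 1) (w δ)) (𝓝[>] 0) := by
    unfold kapp
    exact iInf₂_le w hwT
  have h2 : liminf (fun δ => LamD phi p δ (Ioo 0 1) (w δ)) (𝓝[>] (0:ℝ))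
      ≤ kapp phi p - ENNReal.ofReal ε := by
    have hfreq : ∃ᶠ δ in 𝓝[>] (0:ℝ),
        LamD phi p δ (Ioo 0 1) (w δ) ≤ kapp phi p - ENNReal.ofReal ε := by
      refine hDto.frequently (Frequently.of_forall fun n => ?_)
      rw [hwD n]
      exact (hLamV n).le
    exact Filter.liminf_le_of_frequently_le' hfreq
  have h3 : kapp phi p - ENNReal.ofReal ε < kapp phi p :=
    ENNReal.sub_lt_self hκtop (lt_of_le_of_lt zero_le hbig).ne'
      (ENNReal.ofReal_pos.mpr hε).ne'
  exact absurd (h1.trans h2) (not_le.mpr h3)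
end
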